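/- arXiv:1705.06533 — 6 statements merged into one kernel-verified Lean document; each statement's English description precedes it below -/
import Mathlib

section
/- Consider a discrete-time investment problem over periods t = 0, 1, ..., T with k risky assets whose returns in each period are (conditionally) i.i.d. multivariate normal N_k(μ, Σ) with Σ symmetric positive definite, gross risk-free returns R_{f,i} > 0 (net returns r_{f,i} = R_{f,i} − 1) for i = 1, ..., T, and exponential utility U(x) = −exp(−γx) with risk aversion γ > 0. Define the Bellman value functions recursively by V_T(W) = −exp(−γW) and, for t = T−1, ..., 0, V_t(W) = sup over v ∈ ℝ^k of ∫ V_{t+1}( W (R_{f,t+1} + ⟨v, x − r_{f,t+1}·𝟏⟩) ) dN_k(μ,Σ)(x), where 𝟏 is the all-ones vector. Then for every t ∈ {0, ..., T} and every W > 0, V_t(W) = −exp( −γ W ∏_{i=t+1}^{T} R_{f,i} − (1/2) ∑_{s=t+1}^{T} (μ − r_{f,s}𝟏)ᵀ Σ^{−1} (μ − r_{f,s}𝟏) ) (with the empty product equal to 1 and empty sum equal to 0), and for t ≤ T−1 the supremum defining V_t(W) is attained uniquely at the portfolio weight vector w_t = C_t Σ^{−1}(μ − r_{f,t+1}𝟏)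 with C_t = ( γ W ∏_{i=t+2}^{T} R_{f,i} )^{−1}. -/
open MeasureTheory Matrix Real
open scoped NNReal ENNReal

section AuxGaussian

lemma integrable_gauss1d (b : ℝ) : Integrable fun t : ℝ => Real.exp (b * t - t ^ 2 / 2) := by
  have h : ∀ t : ℝ, b * t - t ^ 2 / 2 = -(1/2 : ℝ) * (t - b) ^ 2 + b ^ 2 / 2 := by
    intro t; ring
  simp_rw [h, Real.exp_add]
  exact ((integrable_exp_neg_mul_sq (by norm_num : (0:ℝ) < 1/2)).comp_sub_right b).mul_const _

lemma integral_gauss1d (b : ℝ) :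
    ∫ t : ℝ, Real.exp (b * t - t ^ 2 / 2) = Real.sqrt (2 * π) * Real.exp (b ^ 2 / 2) := by
  have h : ∀ t : ℝ, b * t - t ^ 2 / 2 = -(1/2 : ℝ) * (t - b) ^ 2 + b ^ 2 / 2 := by
    intro t; ring
  simp_rw [h, Real.exp_add]
  rw [integral_mul_const]
  rw [integral_sub_right_eq_self (fun t : ℝ => Real.exp (-(1/2 : ℝ) * t ^ 2)) b]
  rw [integral_gaussian (1/2)]
  norm_num
  rw [mul_comm]

lemma sqrt_pow' {x : ℝ} (hx : 0 ≤ x) (k : ℕ) : Real.sqrt x ^ k = Real.sqrt (x ^ k) := by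
  induction k with
  | zero => simp
  | succ n ih => rw [pow_succ, pow_succ, ih, ← Real.sqrt_mul (by positivity)]

lemma pi_gauss {k : ℕ} (c : Fin k → ℝ) :
    ∫ z : Fin k → ℝ, Real.exp (c ⬝ᵥ z - z ⬝ᵥ z / 2)
      = Real.sqrt ((2 * π) ^ k) * Real.exp (c ⬝ᵥ c / 2) := by
  have h : ∀ z : Fin k → ℝ, Real.exp (c ⬝ᵥ z - z ⬝ᵥ z / 2)
      = ∏ i, Real.exp (c i * z i - (z i) ^ 2 / 2) := by
    intro z
    rw [← Real.exp_sum]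
    congr 1
    simp [dotProduct, Finset.sum_div, Finset.sum_sub_distrib, sq]
  simp_rw [h]
  rw [MeasureTheory.integral_fintype_prod_volume_eq_prod
    (f := fun i (t : ℝ) => Real.exp (c i * t - t ^ 2 / 2))]
  simp_rw [integral_gauss1d]
  rw [Finset.prod_mul_distrib, Finset.prod_const, ← Real.exp_sum]
  congr 1
  · rw [Finset.card_univ, Fintype.card_fin, sqrt_pow' (by positivity)]
  · congr 1
    simp [dotProduct, Finset.sum_div, sq]

lemma integral_comp_mulVec {k : ℕ} {B : Matrix (Fin k) (Fin k) ℝ} (hB : B.det ≠ 0)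
    (f : (Fin k → ℝ) → ℝ) (hf : Continuous f) :
    ∫ x, f x = |B.det| * ∫ z, f (B *ᵥ z) := by
  have hmap := Real.map_matrix_volume_pi_eq_smul_volume_pi hB
  have hlin : Continuous (Matrix.toLin' B) :=
    LinearMap.continuous_of_finiteDimensional _
  have h1 : ∫ z, f (B *ᵥ z) = ∫ x, f x ∂(Measure.map (Matrix.toLin' B) volume) := by
    rw [integral_map hlin.measurable.aemeasurable hf.aestronglyMeasurable]
    simp [Matrix.toLin'_apply]
  rw [h1, hmap, integral_smul_measure]
  have habs : (0:ℝ) < |B.det| := abs_pos.mpr hB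
  rw [ENNReal.toReal_ofReal (by positivity)]
  rw [abs_inv]
  rw [smul_eq_mul, ← mul_assoc, mul_inv_cancel₀ habs.ne', one_mul]

lemma continuous_dot {k : ℕ} (a : Fin k → ℝ) : Continuous fun x : Fin k → ℝ => a ⬝ᵥ x := by
  unfold dotProduct
  exact continuous_finset_sum _ fun i _ => (continuous_const.mul (continuous_apply i))

lemma continuous_quadform {k : ℕ} (M : Matrix (Fin k) (Fin k) ℝ) (μ : Fin k → ℝ) :
    Continuous fun x : Fin k → ℝ => (x - μ) ⬝ᵥ (M *ᵥ (x - μ)) := by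
  unfold dotProduct Matrix.mulVec
  refine continuous_finset_sum _ fun i _ => ?_
  refine Continuous.mul (by fun_prop) ?_
  unfold dotProduct
  exact continuous_finset_sum _ fun j _ => by fun_prop

open scoped MatrixOrder in
lemma mgf_volume {k : ℕ} {S : Matrix (Fin k) (Fin k) ℝ} (hS : S.PosDef) (μ a : Fin k → ℝ) :
    ∫ x : Fin k → ℝ, Real.exp (a ⬝ᵥ x - (x - μ) ⬝ᵥ (S⁻¹ *ᵥ (x - μ)) / 2)
      = Real.sqrt ((2 * π) ^ k * S.det) * Real.exp (a ⬝ᵥ μ + a ⬝ᵥ (S *ᵥ a) / 2) := by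
  set B := CFC.sqrt S with hBdef
  have hBS : B * B = S := CFC.sqrt_mul_sqrt_self S (Matrix.nonneg_iff_posSemidef.mpr hS.posSemidef)
  have hBsym : Bᵀ = B := by
    rw [← Matrix.conjTranspose_eq_transpose_of_trivial]
    exact (Matrix.nonneg_iff_posSemidef.mp (CFC.sqrt_nonneg S)).1
  have hdet2 : B.det * B.det = S.det := by rw [← Matrix.det_mul, hBS]
  have hSdetpos : 0 < S.det := hS.det_pos
  have hdet : B.det ≠ 0 := by
    intro h0
    rw [h0, mul_zero] at hdet2
    exact hSdetpos.ne' hdet2.symm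
  have hBunit : IsUnit B.det := isUnit_iff_ne_zero.mpr hdet
  have hBinv : B * B⁻¹ = 1 := Matrix.mul_nonsing_inv B hBunit
  have hBinv' : B⁻¹ * B = 1 := Matrix.nonsing_inv_mul B hBunit
  have hstep1 : ∫ x : Fin k → ℝ, Real.exp (a ⬝ᵥ x - (x - μ) ⬝ᵥ (S⁻¹ *ᵥ (x - μ)) / 2)
      = ∫ y : Fin k → ℝ, Real.exp (a ⬝ᵥ (y + μ) - y ⬝ᵥ (S⁻¹ *ᵥ y) / 2) := by
    rw [← integral_add_right_eq_self
      (fun x => Real.exp (a ⬝ᵥ x - (x - μ) ⬝ᵥ (S⁻¹ *ᵥ (x - μ)) / 2)) μ]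
    congr 1; funext y; simp
  have hcont : Continuous fun y : Fin k → ℝ => Real.exp (a ⬝ᵥ (y + μ) - y ⬝ᵥ (S⁻¹ *ᵥ y) / 2) := by
    have h1 : Continuous fun y : Fin k → ℝ => a ⬝ᵥ (y + μ) :=
      (continuous_dot a).comp (by fun_prop)
    have h2 : Continuous fun y : Fin k → ℝ => (y - 0) ⬝ᵥ (S⁻¹ *ᵥ (y - 0)) :=
      continuous_quadform _ 0
    simp only [sub_zero] at h2
    exact Real.continuous_exp.comp (h1.sub (h2.div_const 2))
  rw [hstep1, integral_comp_mulVec hdet _ hcont]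
  have hsimp : ∀ z : Fin k → ℝ,
      Real.exp (a ⬝ᵥ (B *ᵥ z + μ) - (B *ᵥ z) ⬝ᵥ (S⁻¹ *ᵥ (B *ᵥ z)) / 2)
        = Real.exp (a ⬝ᵥ μ) * Real.exp ((B *ᵥ a) ⬝ᵥ z - z ⬝ᵥ z / 2) := by
    intro z
    have e1 : a ⬝ᵥ (B *ᵥ z) = (B *ᵥ a) ⬝ᵥ z := by
      rw [Matrix.dotProduct_mulVec, ← Matrix.mulVec_transpose, hBsym]
    have e2 : (B *ᵥ z) ⬝ᵥ (S⁻¹ *ᵥ (B *ᵥ z)) = z ⬝ᵥ z := by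
      have hkey : B * S⁻¹ * B = 1 := by
        rw [← hBS, Matrix.mul_inv_rev, ← Matrix.mul_assoc, hBinv, Matrix.one_mul, hBinv']
      rw [Matrix.dotProduct_mulVec, Matrix.vecMul_mulVec, hBsym, Matrix.dotProduct_mulVec,
        Matrix.vecMul_vecMul, hkey, Matrix.vecMul_one]
    rw [dotProduct_add, e1, e2, ← Real.exp_add]
    ring_nf
  simp_rw [hsimp]
  rw [MeasureTheory.integral_const_mul, pi_gauss]
  have e3 : (B *ᵥ a) ⬝ᵥ (B *ᵥ a) = a ⬝ᵥ (S *ᵥ a) := by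
    rw [Matrix.dotProduct_mulVec (B *ᵥ a), Matrix.vecMul_mulVec, hBsym, hBS,
      ← Matrix.dotProduct_mulVec]
  have e4 : Real.sqrt ((2 * π) ^ k * S.det) = |B.det| * Real.sqrt ((2 * π) ^ k) := by
    rw [← hdet2, Real.sqrt_mul (by positivity), Real.sqrt_mul_self_eq_abs, mul_comm]
  rw [e3, e4, Real.exp_add]
  ring

end AuxGaussian

/-- The `k`-dimensional Gaussian probability measure `N_k(μ, S)` on `ℝ^k`, defined via its
Lebesgue density `((2π)^k det S)^{-1/2} exp(-(x-μ)ᵀ S⁻¹ (x-μ)/2)`. -/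
noncomputable def multivariateGaussian {k : ℕ} (μ : Fin k → ℝ)
    (S : Matrix (Fin k) (Fin k) ℝ) : Measure (Fin k → ℝ) :=
  volume.withDensity fun x =>
    ENNReal.ofReal
      (Real.exp (-((x - μ) ⬝ᵥ (S⁻¹ *ᵥ (x - μ))) / 2) / Real.sqrt ((2 * π) ^ k * S.det))

section AuxMain

lemma mgf_gaussian {k : ℕ} {S : Matrix (Fin k) (Fin k) ℝ} (hS : S.PosDef) (μ u : Fin k → ℝ) :
    ∫ x, Real.exp (u ⬝ᵥ x) ∂(multivariateGaussian μ S)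
      = Real.exp (u ⬝ᵥ μ + u ⬝ᵥ (S *ᵥ u) / 2) := by
  set c : ℝ := Real.sqrt ((2 * π) ^ k * S.det) with hc
  have hcpos : 0 < c := Real.sqrt_pos.mpr
    (mul_pos (by positivity) hS.det_pos)
  set d : (Fin k → ℝ) → ℝ :=
    fun x => Real.exp (-((x - μ) ⬝ᵥ (S⁻¹ *ᵥ (x - μ))) / 2) / c with hd
  have hdcont : Continuous d :=
    ((Real.continuous_exp.comp ((continuous_quadform S⁻¹ μ).neg.div_const 2)).div_const c)
  have hmeas : Measurable fun x => Real.toNNReal (d x) :=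
    (continuous_real_toNNReal.comp hdcont).measurable
  have h0 : multivariateGaussian μ S
      = volume.withDensity fun x => ((Real.toNNReal (d x) : ℝ≥0) : ℝ≥0∞) := by
    unfold multivariateGaussian
    rfl
  rw [h0, integral_withDensity_eq_integral_smul hmeas]
  have hptw : ∀ x : Fin k → ℝ, Real.toNNReal (d x) • Real.exp (u ⬝ᵥ x)
      = Real.exp (u ⬝ᵥ x - (x - μ) ⬝ᵥ (S⁻¹ *ᵥ (x - μ)) / 2) * c⁻¹ := by
    intro x
    have hdnn : 0 ≤ d x := by positivity
    rw [NNReal.smul_def, Real.coe_toNNReal _ hdnn, smul_eq_mul, hd]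
    rw [div_mul_eq_mul_div, ← Real.exp_add, div_eq_mul_inv]
    congr 2
    ring
  simp_rw [hptw]
  rw [integral_mul_const, mgf_volume hS]
  rw [← hc, mul_comm c, mul_assoc, mul_inv_cancel₀ hcpos.ne', mul_one]

lemma dot_symm {k : ℕ} {S : Matrix (Fin k) (Fin k) ℝ} (hSsym : Sᵀ = S) (x y : Fin k → ℝ) :
    x ⬝ᵥ (S *ᵥ y) = y ⬝ᵥ (S *ᵥ x) := by
  rw [Matrix.dotProduct_mulVec, ← Matrix.mulVec_transpose, hSsym, dotProduct_comm]

lemma quad_identity {k : ℕ} {S : Matrix (Fin k) (Fin k) ℝ} (hS : S.PosDef) {β : ℝ} (hβ : β ≠ 0)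
    (m v : Fin k → ℝ) :
    -β * (v ⬝ᵥ m) + β ^ 2 * (v ⬝ᵥ (S *ᵥ v)) / 2
      = -(m ⬝ᵥ (S⁻¹ *ᵥ m)) / 2
        + β ^ 2 * ((v - β⁻¹ • (S⁻¹ *ᵥ m)) ⬝ᵥ (S *ᵥ (v - β⁻¹ • (S⁻¹ *ᵥ m)))) / 2 := by
  have hSsym : Sᵀ = S := by
    rw [← Matrix.conjTranspose_eq_transpose_of_trivial]
    exact hS.isHermitian
  set u : Fin k → ℝ := S⁻¹ *ᵥ m with hu
  have hSu : S *ᵥ u = m := by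
    rw [hu, Matrix.mulVec_mulVec, Matrix.mul_nonsing_inv _ (isUnit_iff_ne_zero.mpr hS.det_pos.ne'),
      Matrix.one_mulVec]
  have hm : m = S *ᵥ u := hSu.symm
  rw [hm]
  have hexp : (v - β⁻¹ • u) ⬝ᵥ (S *ᵥ (v - β⁻¹ • u))
      = v ⬝ᵥ (S *ᵥ v) - 2 * β⁻¹ * (v ⬝ᵥ (S *ᵥ u)) + β⁻¹ ^ 2 * (u ⬝ᵥ (S *ᵥ u)) := by
    rw [Matrix.mulVec_sub, Matrix.mulVec_smul, sub_dotProduct, smul_dotProduct,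
      dotProduct_sub, dotProduct_smul, dotProduct_sub, dotProduct_smul,
      dot_symm hSsym u v]
    simp only [smul_eq_mul]
    ring
  have huu : (S *ᵥ u) ⬝ᵥ u = u ⬝ᵥ (S *ᵥ u) := dotProduct_comm _ _
  rw [hexp, huu]
  field_simp
  ring

lemma hyperplane_null {k : ℕ} {v : Fin k → ℝ} (hv : v ≠ 0) (c : ℝ) :
    volume {x : Fin k → ℝ | v ⬝ᵥ x = c} = 0 := by
  have hvv : v ⬝ᵥ v ≠ 0 := fun h => hv (dotProduct_self_eq_zero.mp h)
  set f : (Fin k → ℝ) →ₗ[ℝ] ℝ :=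
    { toFun := fun x => v ⬝ᵥ x
      map_add' := fun x y => dotProduct_add v x y
      map_smul' := fun a x => by simp [dotProduct_smul] } with hf
  set K : Submodule ℝ (Fin k → ℝ) := LinearMap.ker f with hK
  have hKne : K ≠ ⊤ := by
    intro h
    have : v ∈ K := h ▸ Submodule.mem_top
    rw [hK, LinearMap.mem_ker] at this
    exact hvv this
  set x₀ : Fin k → ℝ := (c / (v ⬝ᵥ v)) • v with hx₀
  have hvx₀ : v ⬝ᵥ x₀ = c := by
    rw [hx₀, dotProduct_smul, smul_eq_mul, div_mul_cancel₀ _ hvv]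
  have hset : {x : Fin k → ℝ | v ⬝ᵥ x = c} = (fun x => -x₀ + x) ⁻¹' (K : Set (Fin k → ℝ)) := by
    ext x
    simp only [Set.mem_setOf_eq, Set.mem_preimage, SetLike.mem_coe, hK, LinearMap.mem_ker]
    constructor
    · intro h
      show f (-x₀ + x) = 0
      rw [map_add, map_neg]
      show -(v ⬝ᵥ x₀) + v ⬝ᵥ x = 0
      rw [hvx₀, h]; ring
    · intro h
      have h2 : -(v ⬝ᵥ x₀) + v ⬝ᵥ x = 0 := by
        have := h
        rw [map_add, map_neg] at this
        exact this
      rw [hvx₀] at h2; linarith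
  rw [hset]
  rw [measure_preimage_add]
  exact MeasureTheory.Measure.addHaar_submodule volume K hKne

end AuxMain

/-- (Bellman-recursion form of the paper's Proposition 1.)
For the multi-period exponential-utility portfolio problem with i.i.d. `N_k(μ, Σ)` returns,
gross risk-free returns `R i > 0` (net returns `r i = R i - 1`) and risk aversion `γ > 0`,
the Bellman value functions `V t`, defined by `V T W = -exp(-γ W)` and
`V t W = ⨆ v, ∫ V (t+1) (W (R (t+1) + ⟨v, x - r (t+1)·𝟏⟩)) dN_k(μ,Σ)(x)` for `t < T`,
satisfy, for all `t ≤ T` and `W > 0`,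
`V t W = -exp(-γ W ∏_{i=t+1}^T R i - (1/2) ∑_{s=t+1}^T (μ - r s·𝟏)ᵀ Σ⁻¹ (μ - r s·𝟏))`,
and for `t < T` the supremum is attained uniquely at
`w_t = C_t Σ⁻¹ (μ - r (t+1)·𝟏)` with `C_t = (γ W ∏_{i=t+2}^T R i)⁻¹`. -/
theorem multiperiod_exponential_utility_bellman {k : ℕ} (T : ℕ)
    (μ : Fin k → ℝ) (S : Matrix (Fin k) (Fin k) ℝ) (hS : S.PosDef)
    (R r : ℕ → ℝ) (hR : ∀ i, 1 ≤ i → i ≤ T → 0 < R i) (hr : ∀ i, r i = R i - 1)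
    (γ : ℝ) (hγ : 0 < γ)
    (V : ℕ → ℝ → ℝ)
    (hVT : ∀ W, V T W = -Real.exp (-γ * W))
    (hVrec : ∀ t, t < T → ∀ W, V t W =
      ⨆ v : Fin k → ℝ,
        ∫ x, V (t + 1) (W * (R (t + 1) + v ⬝ᵥ (x - r (t + 1) • (1 : Fin k → ℝ))))
          ∂(multivariateGaussian μ S)) :
    (∀ t ≤ T, ∀ W : ℝ, 0 < W →
      V t W = -Real.exp (-γ * W * ∏ i ∈ Finset.Icc (t + 1) T, R i
        - (1 / 2) * ∑ s ∈ Finset.Icc (t + 1) T,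
            (μ - r s • (1 : Fin k → ℝ)) ⬝ᵥ (S⁻¹ *ᵥ (μ - r s • (1 : Fin k → ℝ))))) ∧
    (∀ t, t < T → ∀ W : ℝ, 0 < W →
      ∀ w : Fin k → ℝ,
        w = (γ * W * ∏ i ∈ Finset.Icc (t + 2) T, R i)⁻¹ •
              (S⁻¹ *ᵥ (μ - r (t + 1) • (1 : Fin k → ℝ))) →
        (∀ v : Fin k → ℝ,
          (∫ x, V (t + 1) (W * (R (t + 1) + v ⬝ᵥ (x - r (t + 1) • (1 : Fin k → ℝ))))
              ∂(multivariateGaussian μ S)) ≤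
            ∫ x, V (t + 1) (W * (R (t + 1) + w ⬝ᵥ (x - r (t + 1) • (1 : Fin k → ℝ))))
              ∂(multivariateGaussian μ S)) ∧
        (∀ v : Fin k → ℝ,
          (∫ x, V (t + 1) (W * (R (t + 1) + v ⬝ᵥ (x - r (t + 1) • (1 : Fin k → ℝ))))
              ∂(multivariateGaussian μ S)) =
            (∫ x, V (t + 1) (W * (R (t + 1) + w ⬝ᵥ (x - r (t + 1) • (1 : Fin k → ℝ))))
              ∂(multivariateGaussian μ S)) → v = w)) := by
  -- abbreviations
  set G := multivariateGaussian μ S with hG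
  set m : ℕ → (Fin k → ℝ) := fun s => μ - r s • (1 : Fin k → ℝ) with hm
  set q : ℕ → ℝ := fun s => m s ⬝ᵥ (S⁻¹ *ᵥ m s) with hq
  have hSnn : ∀ x : Fin k → ℝ, 0 ≤ x ⬝ᵥ (S *ᵥ x) := by
    intro x
    have := hS.posSemidef.dotProduct_mulVec_nonneg x
    simpa using this
  have hSpos : ∀ x : Fin k → ℝ, x ≠ 0 → 0 < x ⬝ᵥ (S *ᵥ x) := by
    intro x hx
    have := hS.dotProduct_mulVec_pos hx
    simpa using this
  have hprodpos : ∀ a : ℕ, 1 ≤ a → 0 < ∏ i ∈ Finset.Icc a T, R i := by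
    intro a ha
    refine Finset.prod_pos fun i hi => ?_
    rw [Finset.mem_Icc] at hi
    exact hR i (by omega) hi.2
  have hsplit : ∀ t : ℕ, t < T →
      Finset.Icc (t + 1) T = insert (t + 1) (Finset.Icc (t + 2) T) := by
    intro t ht
    ext x
    simp only [Finset.mem_Icc, Finset.mem_insert]
    omega
  have hnotmem : ∀ t : ℕ, t + 1 ∉ Finset.Icc (t + 2) T := by
    intro t
    simp only [Finset.mem_Icc]
    omega
  have hprodsplit : ∀ t : ℕ, t < T →
      ∏ i ∈ Finset.Icc (t + 1) T, R i = R (t + 1) * ∏ i ∈ Finset.Icc (t + 2) T, R i := by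
    intro t ht
    rw [hsplit t ht, Finset.prod_insert (hnotmem t)]
  have hsumsplit : ∀ t : ℕ, t < T →
      ∑ s ∈ Finset.Icc (t + 1) T, q s = q (t + 1) + ∑ s ∈ Finset.Icc (t + 2) T, q s := by
    intro t ht
    rw [hsplit t ht, Finset.sum_insert (hnotmem t)]
  -- core step: the integral formula
  have hstep : ∀ t, t < T → (∀ W', W' ≠ 0 → V (t + 1) W'
        = -Real.exp (-γ * W' * ∏ i ∈ Finset.Icc (t + 2) T, R i
            - (1 / 2) * ∑ s ∈ Finset.Icc (t + 2) T, q s)) →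
      ∀ W : ℝ, W ≠ 0 → ∀ v : Fin k → ℝ,
      (∫ x, V (t + 1) (W * (R (t + 1) + v ⬝ᵥ (x - r (t + 1) • (1 : Fin k → ℝ)))) ∂G)
        = -Real.exp (-γ * W * ∏ i ∈ Finset.Icc (t + 1) T, R i
            - (1 / 2) * ∑ s ∈ Finset.Icc (t + 2) T, q s
            + (-(γ * W * ∏ i ∈ Finset.Icc (t + 2) T, R i) * (v ⬝ᵥ m (t + 1))
               + (γ * W * ∏ i ∈ Finset.Icc (t + 2) T, R i) ^ 2 * (v ⬝ᵥ (S *ᵥ v)) / 2)) := by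
    intro t ht hIH W hW v
    have hR' : 0 < R (t + 1) := hR (t + 1) (by omega) (by omega)
    set P := ∏ i ∈ Finset.Icc (t + 2) T, R i with hP
    have hPpos : 0 < P := hprodpos (t + 2) (by omega)
    set β := γ * W * P with hβdef
    have hβ : β ≠ 0 := mul_ne_zero (mul_ne_zero hγ.ne' hW) hPpos.ne'
    have haept : ∀ᵐ x ∂G, R (t + 1) + v ⬝ᵥ (x - r (t + 1) • (1 : Fin k → ℝ)) ≠ 0 := by
      by_cases hv : v = 0
      · refine Filter.Eventually.of_forall fun x => ?_
        rw [hv, zero_dotProduct, add_zero]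
        exact hR'.ne'
      · have hnull := hyperplane_null hv (r (t + 1) * (v ⬝ᵥ (1 : Fin k → ℝ)) - R (t + 1))
        have hGnull : G {x : Fin k → ℝ |
            v ⬝ᵥ x = r (t + 1) * (v ⬝ᵥ (1 : Fin k → ℝ)) - R (t + 1)} = 0 := by
          rw [hG]
          exact (withDensity_absolutelyContinuous _ _) hnull
        rw [ae_iff]
        refine measure_mono_null ?_ hGnull
        intro x hx
        simp only [Set.mem_setOf_eq, not_not] at hx
        have hx' : R (t + 1) + v ⬝ᵥ (x - r (t + 1) • (1 : Fin k → ℝ)) = 0 := hx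
        rw [dotProduct_sub, dotProduct_smul, smul_eq_mul] at hx'
        simp only [Set.mem_setOf_eq]
        linarith
    have hae : (fun x => V (t + 1) (W * (R (t + 1) + v ⬝ᵥ (x - r (t + 1) • (1 : Fin k → ℝ)))))
        =ᵐ[G] (fun x => (-Real.exp (-β * R (t + 1) + β * r (t + 1) * (v ⬝ᵥ (1 : Fin k → ℝ))
          - (1 / 2) * ∑ s ∈ Finset.Icc (t + 2) T, q s)) * Real.exp (((-β) • v) ⬝ᵥ x)) := by
      refine haept.mono fun x hx => ?_
      dsimp only
      have harg : W * (R (t + 1) + v ⬝ᵥ (x - r (t + 1) • (1 : Fin k → ℝ))) ≠ 0 :=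
        mul_ne_zero hW hx
      rw [hIH _ harg, neg_mul (Real.exp _), ← Real.exp_add]
      congr 1
      rw [smul_dotProduct, smul_eq_mul, dotProduct_sub, dotProduct_smul,
        smul_eq_mul, hβdef]
      ring
    rw [integral_congr_ae hae, MeasureTheory.integral_const_mul, hG,
      mgf_gaussian hS μ ((-β) • v), neg_mul (Real.exp _), ← Real.exp_add]
    congr 1
    have e1 : ((-β) • v) ⬝ᵥ μ = -β * (v ⬝ᵥ μ) := by
      rw [smul_dotProduct, smul_eq_mul]
    have e2 : ((-β) • v) ⬝ᵥ (S *ᵥ ((-β) • v)) = β ^ 2 * (v ⬝ᵥ (S *ᵥ v)) := by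
      rw [Matrix.mulVec_smul, smul_dotProduct, dotProduct_smul]
      simp only [smul_eq_mul]
      ring
    have e3 : v ⬝ᵥ m (t + 1) = v ⬝ᵥ μ - r (t + 1) * (v ⬝ᵥ (1 : Fin k → ℝ)) := by
      rw [hm]
      rw [dotProduct_sub, dotProduct_smul, smul_eq_mul]
    rw [e1, e2, e3, hprodsplit t ht, ← hP, hβdef]
    ring
  -- closed form by downward induction
  have hclosed : ∀ n t : ℕ, t + n = T → ∀ W : ℝ, W ≠ 0 →
      V t W = -Real.exp (-γ * W * ∏ i ∈ Finset.Icc (t + 1) T, R i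
        - (1 / 2) * ∑ s ∈ Finset.Icc (t + 1) T, q s) := by
    intro n
    induction n with
    | zero =>
      intro t ht W hW
      have htT : t = T := by omega
      subst htT
      rw [hVT W, Finset.Icc_eq_empty (by omega : ¬ t + 1 ≤ t), Finset.prod_empty,
        Finset.sum_empty]
      norm_num
    | succ n ih =>
      intro t ht W hW
      have hlt : t < T := by omega
      have hIH : ∀ W' : ℝ, W' ≠ 0 → V (t + 1) W'
          = -Real.exp (-γ * W' * ∏ i ∈ Finset.Icc (t + 2) T, R i
              - (1 / 2) * ∑ s ∈ Finset.Icc (t + 2) T, q s) :=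
        fun W' hW' => ih (t + 1) (by omega) W' hW'
      rw [hVrec t hlt W]
      have hF := hstep t hlt hIH W hW
      set P := ∏ i ∈ Finset.Icc (t + 2) T, R i with hP
      have hPpos : 0 < P := hprodpos (t + 2) (by omega)
      set β := γ * W * P with hβdef
      have hβ : β ≠ 0 := mul_ne_zero (mul_ne_zero hγ.ne' hW) hPpos.ne'
      set w0 : Fin k → ℝ := β⁻¹ • (S⁻¹ *ᵥ m (t + 1)) with hw0
      have hquad : ∀ v : Fin k → ℝ,
          -β * (v ⬝ᵥ m (t + 1)) + β ^ 2 * (v ⬝ᵥ (S *ᵥ v)) / 2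
            = -(q (t + 1)) / 2 + β ^ 2 * ((v - w0) ⬝ᵥ (S *ᵥ (v - w0))) / 2 := by
        intro v
        have := quad_identity hS hβ (m (t + 1)) v
        rw [hw0, hq]
        exact this
      have hgw0 : -β * (w0 ⬝ᵥ m (t + 1)) + β ^ 2 * (w0 ⬝ᵥ (S *ᵥ w0)) / 2
          = -(q (t + 1)) / 2 := by
        rw [hquad w0, sub_self, Matrix.mulVec_zero, dotProduct_zero]
        ring
      have hle : ∀ v : Fin k → ℝ,
          (∫ x, V (t + 1) (W * (R (t + 1) + v ⬝ᵥ (x - r (t + 1) • (1 : Fin k → ℝ)))) ∂G)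
            ≤ ∫ x, V (t + 1) (W * (R (t + 1) + w0 ⬝ᵥ (x - r (t + 1) • (1 : Fin k → ℝ)))) ∂G := by
        intro v
        rw [hF v, hF w0]
        apply neg_le_neg
        rw [Real.exp_le_exp]
        have h1 := hquad v
        have h2 := hSnn (v - w0)
        have h3 : 0 ≤ β ^ 2 := sq_nonneg β
        nlinarith [hgw0]
      have hbdd : BddAbove (Set.range fun v : Fin k → ℝ =>
          ∫ x, V (t + 1) (W * (R (t + 1) + v ⬝ᵥ (x - r (t + 1) • (1 : Fin k → ℝ)))) ∂G) := by
        refine ⟨∫ x, V (t + 1) (W * (R (t + 1) + w0 ⬝ᵥ (x - r (t + 1) • (1 : Fin k → ℝ)))) ∂G, ?_⟩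
        rintro y ⟨v, rfl⟩
        exact hle v
      have hsup : (⨆ v : Fin k → ℝ,
          ∫ x, V (t + 1) (W * (R (t + 1) + v ⬝ᵥ (x - r (t + 1) • (1 : Fin k → ℝ)))) ∂G)
            = ∫ x, V (t + 1) (W * (R (t + 1) + w0 ⬝ᵥ (x - r (t + 1) • (1 : Fin k → ℝ)))) ∂G :=
        le_antisymm (ciSup_le hle) (le_ciSup hbdd w0)
      rw [hsup, hF w0]
      congr 1
      rw [Real.exp_eq_exp, hsumsplit t hlt]
      linarith [hgw0]
  constructor
  · intro t ht W hW
    exact hclosed (T - t) t (by omega) W hW.ne'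
  · intro t ht W hW w hwdef
    have hIH : ∀ W' : ℝ, W' ≠ 0 → V (t + 1) W'
        = -Real.exp (-γ * W' * ∏ i ∈ Finset.Icc (t + 2) T, R i
            - (1 / 2) * ∑ s ∈ Finset.Icc (t + 2) T, q s) :=
      fun W' hW' => hclosed (T - (t + 1)) (t + 1) (by omega) W' hW'
    have hF := hstep t ht hIH W hW.ne'
    set P := ∏ i ∈ Finset.Icc (t + 2) T, R i with hP
    have hPpos : 0 < P := hprodpos (t + 2) (by omega)
    set β := γ * W * P with hβdef
    have hβ : β ≠ 0 := mul_ne_zero (mul_ne_zero hγ.ne' hW.ne') hPpos.ne'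
    have hwdef' : w = β⁻¹ • (S⁻¹ *ᵥ m (t + 1)) := hwdef
    have hquad : ∀ v : Fin k → ℝ,
        -β * (v ⬝ᵥ m (t + 1)) + β ^ 2 * (v ⬝ᵥ (S *ᵥ v)) / 2
          = -(q (t + 1)) / 2 + β ^ 2 * ((v - w) ⬝ᵥ (S *ᵥ (v - w))) / 2 := by
      intro v
      have := quad_identity hS hβ (m (t + 1)) v
      rw [hwdef', hq]
      exact this
    have hgw : -β * (w ⬝ᵥ m (t + 1)) + β ^ 2 * (w ⬝ᵥ (S *ᵥ w)) / 2 = -(q (t + 1)) / 2 := by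
      rw [hquad w, sub_self, Matrix.mulVec_zero, dotProduct_zero]
      ring
    constructor
    · intro v
      rw [hF v, hF w]
      apply neg_le_neg
      rw [Real.exp_le_exp]
      have h1 := hquad v
      have h2 := hSnn (v - w)
      have h3 : 0 ≤ β ^ 2 := sq_nonneg β
      nlinarith [hgw]
    · intro v heq
      rw [hF v, hF w] at heq
      have heq2 := Real.exp_injective (neg_injective heq)
      have h1 := hquad v
      have hzero : (v - w) ⬝ᵥ (S *ᵥ (v - w)) = 0 := by
        have h3 : 0 < β ^ 2 := by positivity
        nlinarith [hgw]
      by_contra hne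
      have hpos := hSpos (v - w) (sub_ne_zero.mpr hne)
      linarith [hzero ▸ hpos]
end

section
/- Let S be a symmetric positive definite k×k real matrix with unique symmetric positive definite square root S^{1/2} (with inverse S^{−1/2}), and let ν, m, a ∈ ℝ^k with ν ≠ m. Set q = ν − m, s = qᵀ S^{−1} q, and u = S^{−1/2} q / √s. Then (ν − a)ᵀ (S + q qᵀ)^{−1} (ν − a) = (m − a)ᵀ S^{−1} (m − a) + 2 ( √s/(1+s) ) (m − a)ᵀ S^{−1/2} u + s/(1+s) − ( s/(1+s) ) ( (m − a)ᵀ S^{−1/2} u )². -/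
open Matrix

lemma aux_vecMulVec_mulVec {k : ℕ} (q v x : Fin k → ℝ) :
    vecMulVec q v *ᵥ x = (v ⬝ᵥ x) • q := by
  ext i
  simp [mulVec, vecMulVec_apply, dotProduct, Finset.mul_sum, mul_comm, mul_left_comm, mul_assoc]

lemma aux_mul_vecMulVec {k : ℕ} (A : Matrix (Fin k) (Fin k) ℝ) (q v : Fin k → ℝ) :
    A * vecMulVec q v = vecMulVec (A *ᵥ q) v := by
  ext i j
  simp [mul_apply, vecMulVec_apply, mulVec, dotProduct, Finset.sum_mul, mul_assoc]

lemma aux_vecMulVec_mul {k : ℕ} (q v : Fin k → ℝ) (A : Matrix (Fin k) (Fin k) ℝ) :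
    vecMulVec q v * A = vecMulVec q (v ᵥ* A) := by
  ext i j
  simp [mul_apply, vecMulVec_apply, vecMul, dotProduct, Finset.mul_sum, mul_assoc]

lemma aux_vecMul_vecMulVec {k : ℕ} (x q v : Fin k → ℝ) :
    x ᵥ* vecMulVec q v = (x ⬝ᵥ q) • v := by
  ext j
  simp [vecMul, vecMulVec_apply, dotProduct, Finset.sum_mul, mul_comm, mul_left_comm, mul_assoc]
  rw [Finset.mul_sum]
  exact Finset.sum_congr rfl fun i _ => by ring

/-- With `S` symmetric positive definite, `Rt` its unique symmetric positive
definite square root (`Rt * Rt = S`, `S^{-1/2} = Rt⁻¹`), `q = ν - m ≠ 0`, `s = qᵀ S⁻¹ q`,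
`u = S^{-1/2} q / √s`, the quadratic form expands as
`(ν-a)ᵀ (S + q qᵀ)⁻¹ (ν-a) = (m-a)ᵀ S⁻¹ (m-a) + 2(√s/(1+s)) (m-a)ᵀ S^{-1/2} u + s/(1+s)
  - (s/(1+s)) ((m-a)ᵀ S^{-1/2} u)²`. -/
theorem sherman_morrison_quadratic_form {k : ℕ} (S Rt : Matrix (Fin k) (Fin k) ℝ)
    (hS : S.PosDef) (hRt : Rt.PosDef) (hRtS : Rt * Rt = S)
    (ν m a : Fin k → ℝ) (hνm : ν ≠ m)
    (q : Fin k → ℝ) (hq : q = ν - m)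
    (s : ℝ) (hs : s = q ⬝ᵥ (S⁻¹ *ᵥ q))
    (u : Fin k → ℝ) (hu : u = (Real.sqrt s)⁻¹ • (Rt⁻¹ *ᵥ q)) :
    (ν - a) ⬝ᵥ ((S + vecMulVec q q)⁻¹ *ᵥ (ν - a)) =
      (m - a) ⬝ᵥ (S⁻¹ *ᵥ (m - a)) + 2 * (Real.sqrt s / (1 + s)) * ((m - a) ⬝ᵥ (Rt⁻¹ *ᵥ u))
        + s / (1 + s) - (s / (1 + s)) * ((m - a) ⬝ᵥ (Rt⁻¹ *ᵥ u)) ^ 2 := by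
  have hq0 : q ≠ 0 := by rw [hq]; exact sub_ne_zero.mpr hνm
  have hspos : 0 < s := by
    have := hS.inv.dotProduct_mulVec_pos hq0
    rw [hs]; simpa using this
  have h1s : (1 : ℝ) + s ≠ 0 := by linarith
  have hsq : Real.sqrt s ≠ 0 := Real.sqrt_ne_zero'.mpr hspos
  set p : Fin k → ℝ := S⁻¹ *ᵥ q with hp
  have hSymm : (S⁻¹)ᵀ = S⁻¹ := by
    have h := hS.isHermitian.inv
    simpa [Matrix.IsHermitian] using h
  have hvm : q ᵥ* S⁻¹ = p := by
    rw [← hSymm, vecMul_transpose]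
  have hVS : vecMulVec q q * S⁻¹ = vecMulVec q p := by
    rw [aux_vecMulVec_mul, hvm]
  have hSS : S * S⁻¹ = 1 := Matrix.mul_nonsing_inv S hS.det_pos.ne'.isUnit
  have hqp : q ⬝ᵥ p = s := hs.symm
  -- Sherman–Morrison
  have hinv : (S + vecMulVec q q)⁻¹ = S⁻¹ - (1 + s)⁻¹ • vecMulVec p p := by
    apply Matrix.inv_eq_right_inv
    have hVpp : vecMulVec q q * vecMulVec p p = s • vecMulVec q p := by
      rw [aux_vecMulVec_mul, aux_vecMul_vecMulVec, hqp]
      ext i j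
      simp [vecMulVec_apply, mul_comm, mul_left_comm]
    have hSpp : S * vecMulVec p p = vecMulVec q p := by
      rw [aux_mul_vecMulVec]
      congr 1
      rw [hp, mulVec_mulVec, hSS, one_mulVec]
    rw [mul_sub, Matrix.mul_smul, add_mul, add_mul, hSS, hSpp, hVS, hVpp]
    have hc : (1 + s)⁻¹ • (vecMulVec q p + s • vecMulVec q p) = vecMulVec q p := by
      rw [smul_add, smul_smul, ← add_smul,
        show (1 + s)⁻¹ + (1 + s)⁻¹ * s = 1 by field_simp, one_smul]
    rw [hc]
    abel
  -- rewrite the RHS inner product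
  have hRinv : Rt⁻¹ *ᵥ u = (Real.sqrt s)⁻¹ • p := by
    rw [hu, mulVec_smul, mulVec_mulVec, ← Matrix.mul_inv_rev, hRtS]
  set w : Fin k → ℝ := m - a with hw
  set t : ℝ := w ⬝ᵥ p with ht
  have hdot : w ⬝ᵥ (Rt⁻¹ *ᵥ u) = (Real.sqrt s)⁻¹ * t := by
    rw [hRinv, dotProduct_smul, ht, smul_eq_mul]
  have hνa : ν - a = w + q := by rw [hw, hq]; abel
  -- symmetric dot product facts
  have hqw : q ⬝ᵥ (S⁻¹ *ᵥ w) = t := by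
    rw [dotProduct_mulVec, hvm, ht, dotProduct_comm]
  have hpw : p ⬝ᵥ w = t := by rw [ht, dotProduct_comm]
  have hpq : p ⬝ᵥ q = s := by rw [dotProduct_comm, hqp]
  -- expand LHS
  rw [hνa, hinv, sub_mulVec, smul_mulVec, aux_vecMulVec_mulVec]
  rw [dotProduct_sub, dotProduct_smul, dotProduct_smul, mulVec_add, dotProduct_add,
    dotProduct_add, add_dotProduct, add_dotProduct]
  have h1 : w ⬝ᵥ (S⁻¹ *ᵥ q) = t := ht.symm
  have h2 : q ⬝ᵥ (S⁻¹ *ᵥ q) = s := hs.symm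
  rw [hqw, hpw, hpq, h1, h2, hdot]
  simp only [smul_eq_mul]
  have hss : ((Real.sqrt s)⁻¹) ^ 2 = s⁻¹ := by
    rw [← Real.sqrt_inv, Real.sq_sqrt (by positivity)]
  have e1 : 2 * (Real.sqrt s / (1 + s)) * ((Real.sqrt s)⁻¹ * t) = 2 * t / (1 + s) := by
    field_simp
  have e2 : s / (1 + s) * ((Real.sqrt s)⁻¹ * t) ^ 2 = t ^ 2 / (1 + s) := by
    rw [mul_pow, hss]
    field_simp
  rw [e1, e2]
  field_simp
  ring
end

section
/- Let k ≥ 1 be an integer, d > 0 a real number, and let B be a random variable with the Beta(k/2, d/2) distribution and u a random vector with the uniform distribution on the unit sphere S^{k−1} ⊂ ℝ^k, with B and u independent. Let S be a symmetric positive definite k×k real matrix with unique symmetric positive definite square root S^{1/2} (inverse S^{−1/2}), let m ∈ ℝ^k, and define the random vector ζ(B,u) = S^{−1} m + √(B(1−B)) S^{−1/2} u − B · S^{−1/2} u uᵀ S^{−1/2} m. Then E[ζ(B,u)] = ( (k+d−1)/(k+d) ) S^{−1} m. -/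
open MeasureTheory Matrix
open scoped ENNReal NNReal

/-- The Beta(a, b) probability measure on `[0,1]`, with Lebesgue density
`x^{a-1}(1-x)^{b-1}/B(a,b)` where `B(a,b) = Γ(a)Γ(b)/Γ(a+b)` is the beta function. -/
noncomputable def betaMeasure (a b : ℝ) : Measure ℝ :=
  volume.withDensity fun x =>
    ENNReal.ofReal (if x ∈ Set.Ioo (0 : ℝ) 1 then
      x ^ (a - 1) * (1 - x) ^ (b - 1) / (Real.Gamma a * Real.Gamma b / Real.Gamma (a + b))
    else 0)


lemma real_beta_integrable {a b : ℝ} (ha : 0 < a) (hb : 0 < b) :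
    IntegrableOn (fun x : ℝ => x ^ (a - 1) * (1 - x) ^ (b - 1)) (Set.Ioo 0 1) := by
  have hc := (Complex.betaIntegral_convergent (u := a) (v := b) (by simpa) (by simpa))
  have h1 : IntegrableOn (fun x : ℝ => (x : ℂ) ^ ((a : ℂ) - 1) * ((1 : ℂ) - x) ^ ((b : ℂ) - 1))
      (Set.Ioc 0 1) := by
    simpa [IntervalIntegrable, intervalIntegrable_iff, Set.uIoc_of_le (zero_le_one (α := ℝ))] using hc
  have h2 : IntegrableOn (fun x : ℝ => ((x : ℂ) ^ ((a : ℂ) - 1) * ((1 : ℂ) - x) ^ ((b : ℂ) - 1)).re)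
      (Set.Ioc 0 1) := Complex.reCLM.integrable_comp h1
  have h3 : IntegrableOn (fun x : ℝ => x ^ (a - 1) * (1 - x) ^ (b - 1)) (Set.Ioc 0 1) := by
    refine h2.congr_fun (fun x hx => ?_) measurableSet_Ioc
    have hx0 : (0:ℝ) ≤ x := le_of_lt hx.1
    have hx1 : (0:ℝ) ≤ 1 - x := by linarith [hx.2]
    have e1 : ((x:ℂ)) ^ ((a:ℂ) - 1) = ((x ^ (a-1) : ℝ) : ℂ) := by
      rw [Complex.ofReal_cpow hx0]; push_cast; ring_nf
    have e2 : ((1:ℂ) - x) ^ ((b:ℂ) - 1) = (((1 - x) ^ (b-1) : ℝ) : ℂ) := by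
      rw [Complex.ofReal_cpow hx1]; push_cast; ring_nf
    beta_reduce; rw [e1, e2, ← Complex.ofReal_mul, Complex.ofReal_re]
  exact h3.mono_set Set.Ioo_subset_Ioc_self

lemma real_beta_integral {a b : ℝ} (ha : 0 < a) (hb : 0 < b) :
    ∫ x in Set.Ioo (0:ℝ) 1, x ^ (a - 1) * (1 - x) ^ (b - 1) =
      Real.Gamma a * Real.Gamma b / Real.Gamma (a + b) := by
  have key : Complex.Gamma a * Complex.Gamma b =
      Complex.Gamma (a + b) * Complex.betaIntegral a b :=
    Complex.Gamma_mul_Gamma_eq_betaIntegral (by simpa) (by simpa)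
  have hBI : Complex.betaIntegral a b =
      ((∫ x in Set.Ioo (0:ℝ) 1, x ^ (a - 1) * (1 - x) ^ (b - 1) : ℝ) : ℂ) :=
    calc Complex.betaIntegral a b
        = ∫ x in Set.Ioc (0:ℝ) 1, ((x ^ (a - 1) * (1 - x) ^ (b - 1) : ℝ) : ℂ) := by
          rw [Complex.betaIntegral, intervalIntegral.integral_of_le zero_le_one]
          refine setIntegral_congr_fun measurableSet_Ioc (fun x hx => ?_)
          have hx0 : (0:ℝ) ≤ x := le_of_lt hx.1
          have hx1 : (0:ℝ) ≤ 1 - x := by linarith [hx.2]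
          rw [Complex.ofReal_mul, Complex.ofReal_cpow hx0, Complex.ofReal_cpow hx1]
          push_cast; ring_nf
      _ = ((∫ x in Set.Ioc (0:ℝ) 1, x ^ (a - 1) * (1 - x) ^ (b - 1) : ℝ) : ℂ) :=
          integral_ofReal
      _ = ((∫ x in Set.Ioo (0:ℝ) 1, x ^ (a - 1) * (1 - x) ^ (b - 1) : ℝ) : ℂ) := by
          rw [integral_Ioc_eq_integral_Ioo]
  have hG : Complex.Gamma (a + b) ≠ 0 := by
    rw [← Complex.ofReal_add, Complex.Gamma_ofReal]
    exact_mod_cast (Real.Gamma_pos_of_pos (by linarith)).ne'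
  have : ((∫ x in Set.Ioo (0:ℝ) 1, x ^ (a - 1) * (1 - x) ^ (b - 1) : ℝ) : ℂ) =
      Complex.Gamma a * Complex.Gamma b / Complex.Gamma (a + b) := by
    rw [← hBI, key]; field_simp
  rw [← Complex.ofReal_add, Complex.Gamma_ofReal, Complex.Gamma_ofReal, Complex.Gamma_ofReal] at this
  exact_mod_cast this

section betaAux
variable (a b : ℝ)

noncomputable def betaDensity : ℝ → ℝ := fun x =>
  if x ∈ Set.Ioo (0 : ℝ) 1 then
    x ^ (a - 1) * (1 - x) ^ (b - 1) / (Real.Gamma a * Real.Gamma b / Real.Gamma (a + b))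
  else 0

lemma betaMeasure_eq : betaMeasure a b =
    volume.withDensity fun x => ENNReal.ofReal (betaDensity a b x) := rfl

lemma betaDensity_eq_indicator : betaDensity a b = (Set.Ioo (0:ℝ) 1).indicator
    (fun x => x ^ (a - 1) * (1 - x) ^ (b - 1) /
      (Real.Gamma a * Real.Gamma b / Real.Gamma (a + b))) := by
  funext x; rw [Set.indicator_apply]; rfl

lemma betaDensity_measurable : Measurable (betaDensity a b) := by
  refine Measurable.ite measurableSet_Ioo ?_ measurable_const
  exact ((measurable_id'.pow_const _).mul
    ((measurable_const.sub measurable_id').pow_const _)).div_const _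

variable {a b}

lemma betaDensity_nonneg (ha : 0 < a) (hb : 0 < b) : ∀ x, 0 ≤ betaDensity a b x := by
  intro x
  unfold betaDensity
  split_ifs with h
  · have h1 : (0:ℝ) < x := h.1
    have h2 : (0:ℝ) < 1 - x := by linarith [h.2]
    have hΓa := Real.Gamma_pos_of_pos ha
    have hΓb := Real.Gamma_pos_of_pos hb
    have hΓab := Real.Gamma_pos_of_pos (by linarith : 0 < a + b)
    positivity
  · exact le_refl _

lemma betaDensity_integrable (ha : 0 < a) (hb : 0 < b) :
    Integrable (betaDensity a b) := by
  rw [betaDensity_eq_indicator]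
  exact IntegrableOn.integrable_indicator
    ((real_beta_integrable ha hb).div_const _) measurableSet_Ioo

lemma betaDensity_integral (ha : 0 < a) (hb : 0 < b) :
    ∫ x, betaDensity a b x = 1 := by
  have hβ : 0 < Real.Gamma a * Real.Gamma b / Real.Gamma (a + b) := by
    have := Real.Gamma_pos_of_pos ha
    have := Real.Gamma_pos_of_pos hb
    have := Real.Gamma_pos_of_pos (by linarith : 0 < a + b)
    positivity
  rw [betaDensity_eq_indicator, integral_indicator measurableSet_Ioo]
  rw [integral_div, real_beta_integral ha hb, div_self hβ.ne']

lemma betaMeasure_isProbability (ha : 0 < a) (hb : 0 < b) :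
    IsProbabilityMeasure (betaMeasure a b) := by
  constructor
  rw [betaMeasure_eq, withDensity_apply _ MeasurableSet.univ, Measure.restrict_univ,
    ← ofReal_integral_eq_lintegral_ofReal (betaDensity_integrable ha hb)
      (Filter.Eventually.of_forall (betaDensity_nonneg ha hb)),
    betaDensity_integral ha hb, ENNReal.ofReal_one]

lemma betaMeasure_compl_Ioo (ha : 0 < a) (hb : 0 < b) :
    betaMeasure a b (Set.Ioo (0:ℝ) 1)ᶜ = 0 := by
  rw [betaMeasure_eq, withDensity_apply _ measurableSet_Ioo.compl]
  have : ∀ x ∈ (Set.Ioo (0:ℝ) 1)ᶜ, ENNReal.ofReal (betaDensity a b x) = 0 := by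
    intro x hx
    unfold betaDensity
    rw [if_neg hx, ENNReal.ofReal_zero]
  rw [setLIntegral_congr_fun measurableSet_Ioo.compl
    this, lintegral_zero]

lemma betaMeasure_mean (ha : 0 < a) (hb : 0 < b) :
    ∫ x, x ∂betaMeasure a b = a / (a + b) := by
  have hβ : 0 < Real.Gamma a * Real.Gamma b / Real.Gamma (a + b) := by
    have := Real.Gamma_pos_of_pos ha
    have := Real.Gamma_pos_of_pos hb
    have := Real.Gamma_pos_of_pos (by linarith : 0 < a + b)
    positivity
  have hmeas : Measurable fun x => (betaDensity a b x).toNNReal :=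
    (betaDensity_measurable a b).real_toNNReal
  have h1 : ∫ x, x ∂betaMeasure a b = ∫ x, betaDensity a b x * x := by
    rw [betaMeasure_eq]
    have hd : (fun x => ENNReal.ofReal (betaDensity a b x)) =
        fun x => ((betaDensity a b x).toNNReal : ℝ≥0∞) := rfl
    rw [hd, integral_withDensity_eq_integral_smul hmeas]
    refine integral_congr_ae (Filter.Eventually.of_forall fun x => ?_)
    simp [NNReal.smul_def, Real.coe_toNNReal _ (betaDensity_nonneg ha hb x)]
  rw [h1]
  have h2 : (fun x => betaDensity a b x * x) = (Set.Ioo (0:ℝ) 1).indicator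
      (fun x => x ^ a * (1 - x) ^ (b - 1) /
        (Real.Gamma a * Real.Gamma b / Real.Gamma (a + b))) := by
    funext x
    rw [Set.indicator_apply]
    unfold betaDensity
    split_ifs with h
    · have hx : (0:ℝ) < x := h.1
      have e : x ^ (a - 1) * x = x ^ a := by
        rw [← Real.rpow_add_one hx.ne' (a - 1)]; norm_num
      rw [div_mul_eq_mul_div, mul_right_comm, e]
    · ring
  rw [h2, integral_indicator measurableSet_Ioo, integral_div]
  have h3 : ∫ x in Set.Ioo (0:ℝ) 1, x ^ a * (1 - x) ^ (b - 1) =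
      Real.Gamma (a + 1) * Real.Gamma b / Real.Gamma (a + 1 + b) := by
    have := real_beta_integral (a := a + 1) (b := b) (by linarith) hb
    simpa using this
  rw [h3, Real.Gamma_add_one ha.ne']
  have h4 : a + 1 + b = (a + b) + 1 := by ring
  rw [h4, Real.Gamma_add_one (by linarith : a + b ≠ 0)]
  have hΓa := Real.Gamma_pos_of_pos ha
  have hΓb := Real.Gamma_pos_of_pos hb
  have hΓab := Real.Gamma_pos_of_pos (by linarith : 0 < a + b)
  field_simp
end betaAux
variable {k : ℕ}

lemma ae_norm_one (ν : Measure (EuclideanSpace ℝ (Fin k)))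
    (hsupp : ν {u : EuclideanSpace ℝ (Fin k) | ‖u‖ = 1}ᶜ = 0) :
    ∀ᵐ u ∂ν, ‖u‖ = 1 := by
  rw [ae_iff]
  exact hsupp

lemma integrable_sphere {F : Type*} [NormedAddCommGroup F]
    (ν : Measure (EuclideanSpace ℝ (Fin k))) [IsFiniteMeasure ν]
    (hsupp : ν {u : EuclideanSpace ℝ (Fin k) | ‖u‖ = 1}ᶜ = 0)
    (g : EuclideanSpace ℝ (Fin k) → F) (hg : Continuous g) (M : ℝ)
    (hbd : ∀ u : EuclideanSpace ℝ (Fin k), ‖u‖ = 1 → ‖g u‖ ≤ M) :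
    Integrable g ν := by
  refine Integrable.mono' (integrable_const M) hg.aestronglyMeasurable ?_
  filter_upwards [ae_norm_one ν hsupp] with u hu
  exact hbd u hu

lemma integral_isometry {F : Type*} [NormedAddCommGroup F] [NormedSpace ℝ F]
    (ν : Measure (EuclideanSpace ℝ (Fin k)))
    (hinv : ∀ f : EuclideanSpace ℝ (Fin k) ≃ₗᵢ[ℝ] EuclideanSpace ℝ (Fin k), ν.map f = ν)
    (f : EuclideanSpace ℝ (Fin k) ≃ₗᵢ[ℝ] EuclideanSpace ℝ (Fin k))
    (g : EuclideanSpace ℝ (Fin k) → F) (hg : Continuous g) :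
    ∫ u, g (f u) ∂ν = ∫ u, g u ∂ν := by
  conv_rhs => rw [← hinv f]
  rw [integral_map f.continuous.measurable.aemeasurable hg.aestronglyMeasurable]

noncomputable def flipAt (i : Fin k) :
    EuclideanSpace ℝ (Fin k) ≃ₗᵢ[ℝ] EuclideanSpace ℝ (Fin k) :=
  LinearIsometryEquiv.piLpCongrRight 2
    (fun j => if j = i then LinearIsometryEquiv.neg ℝ else LinearIsometryEquiv.refl ℝ ℝ)

lemma flipAt_apply (i j : Fin k) (u : EuclideanSpace ℝ (Fin k)) :
    flipAt i u j = if j = i then -u j else u j := by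
  show (if j = i then LinearIsometryEquiv.neg ℝ else LinearIsometryEquiv.refl ℝ ℝ) (u j) = _
  split_ifs <;> rfl

noncomputable def swapAt (i j : Fin k) :
    EuclideanSpace ℝ (Fin k) ≃ₗᵢ[ℝ] EuclideanSpace ℝ (Fin k) :=
  LinearIsometryEquiv.piLpCongrLeft 2 ℝ ℝ (Equiv.swap i j)

lemma swapAt_apply (i j l : Fin k) (u : EuclideanSpace ℝ (Fin k)) :
    swapAt i j u l = u (Equiv.swap i j l) := by
  show (Equiv.piCongrLeft' (fun _ : Fin k => ℝ) (Equiv.swap i j) u) l = _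
  rw [Equiv.piCongrLeft'_apply, Equiv.symm_swap]

lemma continuous_coord (i : Fin k) : Continuous fun u : EuclideanSpace ℝ (Fin k) => u i :=
  (EuclideanSpace.proj (𝕜 := ℝ) i).continuous

lemma abs_coord_le (i : Fin k) (u : EuclideanSpace ℝ (Fin k)) : |u i| ≤ ‖u‖ := by
  have := EuclideanSpace.norm_eq u
  rw [this]
  have h1 : |u i| = Real.sqrt (‖u i‖ ^ 2) := by
    rw [Real.sqrt_sq_eq_abs]; simp
  rw [h1]
  apply Real.sqrt_le_sqrt
  exact Finset.single_le_sum (f := fun j => ‖u j‖ ^ 2) (fun j _ => by positivity)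
    (Finset.mem_univ i)

lemma integrable_coord_mul (ν : Measure (EuclideanSpace ℝ (Fin k))) [IsFiniteMeasure ν]
    (hsupp : ν {u : EuclideanSpace ℝ (Fin k) | ‖u‖ = 1}ᶜ = 0) (i j : Fin k) :
    Integrable (fun u : EuclideanSpace ℝ (Fin k) => u i * u j) ν := by
  refine integrable_sphere ν hsupp _ ((continuous_coord i).mul (continuous_coord j)) 1 ?_
  intro u hu
  rw [Real.norm_eq_abs, abs_mul]
  calc |u i| * |u j| ≤ ‖u‖ * ‖u‖ :=
        mul_le_mul (abs_coord_le i u) (abs_coord_le j u) (abs_nonneg _) (norm_nonneg _)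
    _ = 1 := by rw [hu]; ring

lemma secondMoment_offdiag (ν : Measure (EuclideanSpace ℝ (Fin k)))
    (hinv : ∀ f : EuclideanSpace ℝ (Fin k) ≃ₗᵢ[ℝ] EuclideanSpace ℝ (Fin k), ν.map f = ν)
    {i j : Fin k} (hij : i ≠ j) :
    ∫ u, u i * u j ∂ν = 0 := by
  have h := integral_isometry ν hinv (flipAt i)
    (fun u : EuclideanSpace ℝ (Fin k) => u i * u j)
    ((continuous_coord i).mul (continuous_coord j))
  have h2 : ∀ u : EuclideanSpace ℝ (Fin k), flipAt i u i * flipAt i u j = -(u i * u j) := by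
    intro u
    rw [flipAt_apply, flipAt_apply, if_pos rfl, if_neg (Ne.symm hij)]
    ring
  simp_rw [h2, integral_neg] at h
  linarith [h]

lemma secondMoment_diag_eq (ν : Measure (EuclideanSpace ℝ (Fin k)))
    (hinv : ∀ f : EuclideanSpace ℝ (Fin k) ≃ₗᵢ[ℝ] EuclideanSpace ℝ (Fin k), ν.map f = ν)
    (i j : Fin k) :
    ∫ u, u i * u i ∂ν = ∫ u, u j * u j ∂ν := by
  have h := integral_isometry ν hinv (swapAt i j)
    (fun u : EuclideanSpace ℝ (Fin k) => u i * u i)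
    ((continuous_coord i).mul (continuous_coord i))
  have h2 : ∀ u : EuclideanSpace ℝ (Fin k), swapAt i j u i * swapAt i j u i = u j * u j := by
    intro u
    rw [swapAt_apply, Equiv.swap_apply_left]
  simp_rw [h2] at h
  exact h.symm

lemma secondMoment_diag (hk : 1 ≤ k) (ν : Measure (EuclideanSpace ℝ (Fin k)))
    [IsProbabilityMeasure ν]
    (hsupp : ν {u : EuclideanSpace ℝ (Fin k) | ‖u‖ = 1}ᶜ = 0)
    (hinv : ∀ f : EuclideanSpace ℝ (Fin k) ≃ₗᵢ[ℝ] EuclideanSpace ℝ (Fin k), ν.map f = ν)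
    (i : Fin k) :
    ∫ u, u i * u i ∂ν = 1 / k := by
  have hsum : ∫ u, (∑ j, u j * u j) ∂ν = 1 := by
    have : ∀ᵐ u ∂ν, (∑ j, u j * u j) = (1 : ℝ) := by
      filter_upwards [ae_norm_one ν hsupp] with u hu
      have hn := EuclideanSpace.norm_eq u
      rw [hu] at hn
      have : (1:ℝ) = Real.sqrt (∑ j, ‖u j‖ ^ 2) := hn
      have h2 : (∑ j, ‖u j‖ ^ 2) = 1 := by
        have := congrArg (fun t : ℝ => t ^ 2) this
        simp only at this
        rw [Real.sq_sqrt (by positivity)] at this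
        linarith
      calc (∑ j, u j * u j) = ∑ j, ‖u j‖ ^ 2 := by
            refine Finset.sum_congr rfl fun j _ => ?_
            rw [Real.norm_eq_abs, sq_abs]; ring
        _ = 1 := h2
    rw [integral_congr_ae this, integral_const]
    simp
  have hexch : ∫ u, (∑ j, u j * u j) ∂ν = ∑ j, ∫ u, u j * u j ∂ν :=
    integral_finset_sum _ (fun j _ => integrable_coord_mul ν hsupp j j)
  have hconst : ∀ j, ∫ u, u j * u j ∂ν = ∫ u, u i * u i ∂ν :=
    fun j => secondMoment_diag_eq ν hinv j i
  rw [hexch] at hsum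
  rw [Finset.sum_congr rfl (fun j _ => hconst j), Finset.sum_const, Finset.card_univ,
    Fintype.card_fin, nsmul_eq_mul] at hsum
  have hk0 : (k : ℝ) ≠ 0 := by positivity
  field_simp at hsum ⊢
  linarith [hsum]

lemma firstMoment (ν : Measure (EuclideanSpace ℝ (Fin k)))
    (hinv : ∀ f : EuclideanSpace ℝ (Fin k) ≃ₗᵢ[ℝ] EuclideanSpace ℝ (Fin k), ν.map f = ν) :
    ∫ u, u ∂ν = 0 := by
  have h := integral_isometry ν hinv (LinearIsometryEquiv.neg ℝ)
    (fun u : EuclideanSpace ℝ (Fin k) => u) continuous_id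
  have h' : ∫ u, (-u) ∂ν = ∫ u, u ∂ν := h
  rw [integral_neg] at h'
  have h4 : (2:ℝ) • ∫ u, u ∂ν = 0 := by
    rw [two_smul]
    nth_rewrite 1 [← h']
    exact neg_add_cancel (∫ u, u ∂ν)
  rcases smul_eq_zero.mp h4 with h5 | h5
  · norm_num at h5
  · exact h5

lemma secondMomentVec (hk : 1 ≤ k) (ν : Measure (EuclideanSpace ℝ (Fin k)))
    [IsProbabilityMeasure ν]
    (hsupp : ν {u : EuclideanSpace ℝ (Fin k) | ‖u‖ = 1}ᶜ = 0)
    (hinv : ∀ f : EuclideanSpace ℝ (Fin k) ≃ₗᵢ[ℝ] EuclideanSpace ℝ (Fin k), ν.map f = ν)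
    (w : EuclideanSpace ℝ (Fin k)) :
    ∫ u, (inner ℝ u w : ℝ) • u ∂ν = ((k : ℝ))⁻¹ • w := by
  have hcont : Continuous fun u : EuclideanSpace ℝ (Fin k) => (inner ℝ u w : ℝ) • u :=
    (continuous_id.inner (𝕜 := ℝ) continuous_const).smul continuous_id
  have hint : Integrable (fun u : EuclideanSpace ℝ (Fin k) => (inner ℝ u w : ℝ) • u) ν := by
    refine integrable_sphere ν hsupp _ hcont ‖w‖ ?_
    intro u hu
    rw [norm_smul, Real.norm_eq_abs]
    calc |(inner ℝ u w : ℝ)| * ‖u‖ ≤ ‖u‖ * ‖w‖ * ‖u‖ := by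
          have := abs_real_inner_le_norm u w
          exact mul_le_mul_of_nonneg_right this (norm_nonneg _)
      _ = ‖w‖ := by rw [hu]; ring
  have hinner : ∀ u : EuclideanSpace ℝ (Fin k), (inner ℝ u w : ℝ) = ∑ j, u j * w j := by
    intro u
    simp [PiLp.inner_apply, RCLike.inner_apply, mul_comm]
  refine PiLp.ext fun i => ?_
  have hproj := (EuclideanSpace.proj (𝕜 := ℝ) i).integral_comp_comm hint
  have hL : ∀ u : EuclideanSpace ℝ (Fin k),
      EuclideanSpace.proj (𝕜 := ℝ) i ((inner ℝ u w : ℝ) • u) = ∑ j, w j * (u j * u i) := by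
    intro u
    have : EuclideanSpace.proj (𝕜 := ℝ) i ((inner ℝ u w : ℝ) • u) = (inner ℝ u w : ℝ) * u i := by
      simp
    rw [this, hinner, Finset.sum_mul]
    exact Finset.sum_congr rfl fun j _ => by ring
  have hLHS : ∫ u, EuclideanSpace.proj (𝕜 := ℝ) i ((inner ℝ u w : ℝ) • u) ∂ν
      = ∑ j, w j * ∫ u, u j * u i ∂ν := by
    simp_rw [hL]
    rw [integral_finset_sum _ (fun j _ =>
      (integrable_coord_mul ν hsupp j i).const_mul (w j))]
    exact Finset.sum_congr rfl fun j _ => integral_const_mul _ _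
  have hsum : ∑ j, w j * ∫ u, u j * u i ∂ν = w i * (1 / k) := by
    rw [Finset.sum_eq_single i]
    · rw [secondMoment_diag hk ν hsupp hinv i]
    · intro j _ hji
      rw [secondMoment_offdiag ν hinv hji, mul_zero]
    · intro h
      exact absurd (Finset.mem_univ i) h
  have : (∫ u, (inner ℝ u w : ℝ) • u ∂ν) i = w i * (1 / k) := by
    rw [← hsum, ← hLHS, hproj]
    rfl
  rw [this]
  show _ = (k : ℝ)⁻¹ * w i
  field_simp

/-- Let `B ~ Beta(k/2, d/2)` and let `u` be uniform on the unit sphere of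
`ℝ^k` (law `ν`: the normalized rotation-invariant probability measure carried by the unit
sphere), independent of `B` (so that the pair `(B, u)` has the product law). With `S`
symmetric positive definite, `Rt` its unique symmetric positive definite square root
(`Rt * Rt = S`, `S^{-1/2} = Rt⁻¹`), and
`ζ(B,u) = S⁻¹ m + √(B(1−B)) S^{-1/2} u − B·S^{-1/2} u uᵀ S^{-1/2} m`, one has
`E[ζ(B,u)] = ((k+d−1)/(k+d)) S⁻¹ m`. -/
theorem expectation_zeta {k : ℕ} (hk : 1 ≤ k) (d : ℝ) (hd : 0 < d)
    (ν : Measure (EuclideanSpace ℝ (Fin k))) (hprob : IsProbabilityMeasure ν)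
    (hsupp : ν {u : EuclideanSpace ℝ (Fin k) | ‖u‖ = 1}ᶜ = 0)
    (hinv : ∀ f : EuclideanSpace ℝ (Fin k) ≃ₗᵢ[ℝ] EuclideanSpace ℝ (Fin k), ν.map f = ν)
    (S Rt : Matrix (Fin k) (Fin k) ℝ)
    (hS : S.PosDef) (hRt : Rt.PosDef) (hRtS : Rt * Rt = S)
    (m : EuclideanSpace ℝ (Fin k))
    (ζ : ℝ → EuclideanSpace ℝ (Fin k) → EuclideanSpace ℝ (Fin k))
    (hζ : ∀ b u, ζ b u = Matrix.toEuclideanLin S⁻¹ m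
      + Real.sqrt (b * (1 - b)) • Matrix.toEuclideanLin Rt⁻¹ u
      - (b * (inner ℝ u (Matrix.toEuclideanLin Rt⁻¹ m) : ℝ)) • Matrix.toEuclideanLin Rt⁻¹ u) :
    ∫ p : ℝ × EuclideanSpace ℝ (Fin k), ζ p.1 p.2
        ∂((betaMeasure ((k : ℝ) / 2) (d / 2)).prod ν) =
      (((k : ℝ) + d - 1) / ((k : ℝ) + d)) • Matrix.toEuclideanLin S⁻¹ m := by

  haveI := hprob
  have ha : 0 < (k : ℝ) / 2 := by
    have : (1:ℝ) ≤ (k:ℝ) := by exact_mod_cast hk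
    linarith
  have hb : 0 < d / 2 := by linarith
  set μ := betaMeasure ((k : ℝ) / 2) (d / 2) with hμ
  haveI : IsProbabilityMeasure μ := betaMeasure_isProbability ha hb
  set A : EuclideanSpace ℝ (Fin k) →L[ℝ] EuclideanSpace ℝ (Fin k) :=
    LinearMap.toContinuousLinearMap (Matrix.toEuclideanLin Rt⁻¹) with hA
  have hAapp : ∀ u, A u = Matrix.toEuclideanLin Rt⁻¹ u := fun _ => rfl
  set w : EuclideanSpace ℝ (Fin k) := Matrix.toEuclideanLin Rt⁻¹ m with hw
  set C : EuclideanSpace ℝ (Fin k) := Matrix.toEuclideanLin S⁻¹ m with hC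
  -- a.e. facts for μ
  have haeμ : ∀ᵐ x ∂μ, x ∈ Set.Ioo (0:ℝ) 1 := by
    rw [ae_iff]
    have : {x : ℝ | ¬ x ∈ Set.Ioo (0:ℝ) 1} = (Set.Ioo (0:ℝ) 1)ᶜ := rfl
    rw [this]
    exact betaMeasure_compl_Ioo ha hb
  -- integrability on μ
  have hf1int : Integrable (fun x : ℝ => Real.sqrt (x * (1 - x))) μ := by
    refine Integrable.mono' (integrable_const 1)
      ((continuous_id.mul (continuous_const.sub continuous_id)).sqrt).aestronglyMeasurable ?_
    filter_upwards [haeμ] with x hx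
    rw [Real.norm_eq_abs, abs_of_nonneg (Real.sqrt_nonneg _)]
    have hle : x * (1 - x) ≤ 1 := by nlinarith [hx.1, hx.2]
    calc Real.sqrt (x * (1 - x)) ≤ Real.sqrt 1 := Real.sqrt_le_sqrt hle
      _ = 1 := Real.sqrt_one
  have hbint : Integrable (fun x : ℝ => x) μ := by
    refine Integrable.mono' (integrable_const 1) aestronglyMeasurable_id ?_
    filter_upwards [haeμ] with x hx
    rw [Real.norm_eq_abs, abs_of_nonneg hx.1.le]
    exact hx.2.le
  -- integrability on ν
  have hAuint : Integrable (fun u : EuclideanSpace ℝ (Fin k) => A u) ν := by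
    refine integrable_sphere ν hsupp _ A.continuous ‖A‖ ?_
    intro u hu
    have := A.le_opNorm u
    rw [hu, mul_one] at this
    exact this
  have hidint : Integrable (fun u : EuclideanSpace ℝ (Fin k) => u) ν :=
    integrable_sphere ν hsupp _ continuous_id 1 (fun u hu => le_of_eq hu)
  have hvint : Integrable (fun u : EuclideanSpace ℝ (Fin k) => (inner ℝ u w : ℝ) • u) ν := by
    refine integrable_sphere ν hsupp _
      ((continuous_id.inner (𝕜 := ℝ) continuous_const).smul continuous_id) ‖w‖ ?_
    intro u hu
    rw [norm_smul, Real.norm_eq_abs]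
    calc |(inner ℝ u w : ℝ)| * ‖u‖ ≤ ‖u‖ * ‖w‖ * ‖u‖ :=
          mul_le_mul_of_nonneg_right (abs_real_inner_le_norm u w) (norm_nonneg _)
      _ = ‖w‖ := by rw [hu]; ring
  have hgint : Integrable (fun u : EuclideanSpace ℝ (Fin k) => (inner ℝ u w : ℝ) • A u) ν := by
    have : (fun u : EuclideanSpace ℝ (Fin k) => (inner ℝ u w : ℝ) • A u)
        = fun u => A ((inner ℝ u w : ℝ) • u) := by
      funext u; rw [A.map_smul]
    rw [this]
    exact A.integrable_comp hvint
  -- product integrability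
  have hX : Integrable (fun p : ℝ × EuclideanSpace ℝ (Fin k) =>
      Real.sqrt (p.1 * (1 - p.1)) • A p.2) (μ.prod ν) := hf1int.smul_prod hAuint
  have hY : Integrable (fun p : ℝ × EuclideanSpace ℝ (Fin k) =>
      p.1 • ((inner ℝ p.2 w : ℝ) • A p.2)) (μ.prod ν) := hbint.smul_prod hgint
  have h0 : Integrable (fun _ : ℝ × EuclideanSpace ℝ (Fin k) => C) (μ.prod ν) :=
    integrable_const C
  -- rewrite the integrand
  have hrw : (fun p : ℝ × EuclideanSpace ℝ (Fin k) => ζ p.1 p.2)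
      = fun p => (C + Real.sqrt (p.1 * (1 - p.1)) • A p.2)
          - p.1 • ((inner ℝ p.2 w : ℝ) • A p.2) := by
    funext p
    rw [hζ p.1 p.2]
    rw [smul_smul]
    rfl
  have h0X : Integrable (fun p : ℝ × EuclideanSpace ℝ (Fin k) =>
      C + Real.sqrt (p.1 * (1 - p.1)) • A p.2) (μ.prod ν) := h0.add hX
  rw [hrw, integral_sub h0X hY, integral_add h0 hX]
  -- the three pieces
  have hI0 : ∫ _ : ℝ × EuclideanSpace ℝ (Fin k), C ∂(μ.prod ν) = C := by
    rw [integral_const]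
    simp
  have hIX : ∫ p : ℝ × EuclideanSpace ℝ (Fin k),
      Real.sqrt (p.1 * (1 - p.1)) • A p.2 ∂(μ.prod ν) = 0 := by
    rw [integral_prod_smul (fun x : ℝ => Real.sqrt (x * (1 - x)))
      (fun u : EuclideanSpace ℝ (Fin k) => A u)]
    have : ∫ u, A u ∂ν = A (∫ u, u ∂ν) := A.integral_comp_comm hidint
    rw [this, firstMoment ν hinv, map_zero, smul_zero]
  have hIY : ∫ p : ℝ × EuclideanSpace ℝ (Fin k),
      p.1 • ((inner ℝ p.2 w : ℝ) • A p.2) ∂(μ.prod ν)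
      = (((k : ℝ) + d)⁻¹) • C := by
    rw [integral_prod_smul (fun x : ℝ => x)
      (fun u : EuclideanSpace ℝ (Fin k) => (inner ℝ u w : ℝ) • A u)]
    have h1 : ∫ u, (inner ℝ u w : ℝ) • A u ∂ν = A (∫ u, (inner ℝ u w : ℝ) • u ∂ν) := by
      have : (fun u : EuclideanSpace ℝ (Fin k) => (inner ℝ u w : ℝ) • A u)
          = fun u => A ((inner ℝ u w : ℝ) • u) := by
        funext u; rw [A.map_smul]
      rw [this]
      exact A.integral_comp_comm hvint
    rw [h1, secondMomentVec hk ν hsupp hinv w, A.map_smul, hμ, betaMeasure_mean ha hb]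
    have hAw : A w = C := by
      rw [hAapp, hw, hC]
      have h2 : Matrix.toEuclideanLin Rt⁻¹ (Matrix.toEuclideanLin Rt⁻¹ m)
          = Matrix.toEuclideanLin (Rt⁻¹ * Rt⁻¹) m := by
        simp [Matrix.toEuclideanLin_apply, Matrix.mulVec_mulVec]
      rw [h2, ← Matrix.mul_inv_rev, hRtS]
    rw [hAw, smul_smul]
    congr 1
    have hk1 : (1:ℝ) ≤ (k:ℝ) := by exact_mod_cast hk
    have hkd : (0:ℝ) < (k:ℝ) + d := by linarith
    have hkpos : (0:ℝ) < (k:ℝ) := by linarith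
    field_simp
  rw [hI0, hIX, hIY, add_zero]
  have hk1 : (1:ℝ) ≤ (k:ℝ) := by exact_mod_cast hk
  have hkd : (0:ℝ) < (k:ℝ) + d := by linarith
  have : C - (((k : ℝ) + d)⁻¹) • C = (1 - ((k : ℝ) + d)⁻¹) • C := by
    rw [sub_smul, one_smul]
  rw [this]
  congr 1
  field_simp
end

section
/- Let k ≥ 1 be an integer, d > 0 a real number, and let B be a random variable with the Beta(k/2, d/2) distribution and u a random vector with the uniform distribution on the unit sphere S^{k−1} ⊂ ℝ^k, with B and u independent. Let S be a symmetric positive definite k×k real matrix with unique symmetric positive definite square root S^{1/2} (inverse S^{−1/2}), let m, b ∈ ℝ^k, and define ζ(B,u) = S^{−1} m + √(B(1−B)) S^{−1/2} u − B · S^{−1/2} u uᵀ S^{−1/2} m. Set c₁ = bᵀ S^{−1} b, c₂ = mᵀ S^{−1} m, c₁₂ = bᵀ S^{−1} m. Then E[ (bᵀ ζ(B,u))² ] = ( 1 − 2/(k+d) + 2/((k+d)(k+d+2)) ) c₁₂² + ( d/((k+d)(k+d+2)) + c₂/((k+d)(k+d+2)) ) c₁. -/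
open MeasureTheory Matrix
open scoped ENNReal NNReal

lemma Bab_pos {a b : ℝ} (ha : 0 < a) (hb : 0 < b) :
    0 < Real.Gamma a * Real.Gamma b / Real.Gamma (a + b) :=
  div_pos (mul_pos (Real.Gamma_pos_of_pos ha) (Real.Gamma_pos_of_pos hb))
    (Real.Gamma_pos_of_pos (by linarith))

lemma complex_beta_eq {a b : ℝ} (ha : 0 < a) (hb : 0 < b) :
    Complex.betaIntegral a b
      = ((∫ x in (0:ℝ)..1, x ^ (a-1) * (1-x) ^ (b-1) : ℝ) : ℂ) := by
  rw [Complex.betaIntegral, ← intervalIntegral.integral_ofReal]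
  refine intervalIntegral.integral_congr fun x hx => ?_
  rw [Set.uIcc_of_le zero_le_one] at hx
  have e1 : ((a:ℂ) - 1) = ((a - 1 : ℝ) : ℂ) := by push_cast; ring
  have e2 : ((b:ℂ) - 1) = ((b - 1 : ℝ) : ℂ) := by push_cast; ring
  have e3 : (1 - (x:ℂ)) = ((1 - x : ℝ) : ℂ) := by push_cast; ring
  rw [e1, e2, e3, ← Complex.ofReal_cpow hx.1, ← Complex.ofReal_cpow (by linarith [hx.2])]
  push_cast
  ring

lemma betaIntegral_real {a b : ℝ} (ha : 0 < a) (hb : 0 < b) :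
    ∫ x in Set.Ioo (0:ℝ) 1, x ^ (a-1) * (1-x) ^ (b-1)
      = Real.Gamma a * Real.Gamma b / Real.Gamma (a + b) := by
  have h := Complex.Gamma_mul_Gamma_eq_betaIntegral (s := (a:ℂ)) (t := (b:ℂ))
    (by simpa using ha) (by simpa using hb)
  rw [complex_beta_eq ha hb, ← Complex.ofReal_add, Complex.Gamma_ofReal,
    Complex.Gamma_ofReal, Complex.Gamma_ofReal, ← Complex.ofReal_mul, ← Complex.ofReal_mul] at h
  have h' : Real.Gamma a * Real.Gamma b
      = Real.Gamma (a+b) * ∫ x in (0:ℝ)..1, x ^ (a-1) * (1-x) ^ (b-1) := by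
    exact_mod_cast h
  have hG : Real.Gamma (a+b) ≠ 0 := (Real.Gamma_pos_of_pos (by linarith)).ne'
  rw [intervalIntegral.integral_of_le zero_le_one, integral_Ioc_eq_integral_Ioo] at h'
  field_simp at h' ⊢
  linarith [h']

lemma betaIntegrable_real {a b : ℝ} (ha : 0 < a) (hb : 0 < b) :
    IntegrableOn (fun x : ℝ => x ^ (a-1) * (1-x) ^ (b-1)) (Set.Ioo 0 1) volume := by
  have h := (Complex.betaIntegral_convergent (u := (a:ℂ)) (v := (b:ℂ))
    (by simpa using ha) (by simpa using hb))
  rw [intervalIntegrable_iff_integrableOn_Ioo_of_le zero_le_one] at h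
  have h2 : IntegrableOn
      (fun x : ℝ => ((x:ℂ) ^ ((a:ℂ)-1) * (1-(x:ℂ)) ^ ((b:ℂ)-1)).re) (Set.Ioo 0 1) volume :=
    h.re
  refine h2.congr_fun (fun x hx => ?_) measurableSet_Ioo
  have h1 : (0:ℝ) ≤ x := hx.1.le
  have h2' : (0:ℝ) ≤ 1 - x := by linarith [hx.2]
  have e1 : ((a:ℂ) - 1) = ((a - 1 : ℝ) : ℂ) := by push_cast; ring
  have e2 : ((b:ℂ) - 1) = ((b - 1 : ℝ) : ℂ) := by push_cast; ring
  have e3 : (1 - (x:ℂ)) = ((1 - x : ℝ) : ℂ) := by push_cast; ring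
  beta_reduce
  rw [e1, e2, e3, ← Complex.ofReal_cpow h1, ← Complex.ofReal_cpow h2',
    ← Complex.ofReal_mul, Complex.ofReal_re]

lemma dens_nonneg {a b C : ℝ} (hC : 0 < C) (x : ℝ) :
    0 ≤ (if x ∈ Set.Ioo (0:ℝ) 1 then x ^ (a-1) * (1-x) ^ (b-1) / C else 0) := by
  split
  · next h =>
      exact div_nonneg (mul_nonneg (Real.rpow_nonneg h.1.le _)
        (Real.rpow_nonneg (by linarith [h.2]) _)) hC.le
  · exact le_refl _

lemma dens_measurable (a b C : ℝ) :
    Measurable (fun x => if x ∈ Set.Ioo (0:ℝ) 1 then x ^ (a-1) * (1-x) ^ (b-1) / C else 0) := by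
  apply Measurable.ite measurableSet_Ioo ?_ measurable_const
  fun_prop

lemma betaMeasure_integral {a b : ℝ} (ha : 0 < a) (hb : 0 < b) (f : ℝ → ℝ) :
    ∫ x, f x ∂betaMeasure a b
      = (∫ x in Set.Ioo (0:ℝ) 1, f x * (x ^ (a-1) * (1-x) ^ (b-1)))
          / (Real.Gamma a * Real.Gamma b / Real.Gamma (a+b)) := by
  have hCpos := Bab_pos ha hb
  set C := Real.Gamma a * Real.Gamma b / Real.Gamma (a+b) with hC
  set dens : ℝ → ℝ :=
    fun x => if x ∈ Set.Ioo (0:ℝ) 1 then x ^ (a-1) * (1-x) ^ (b-1) / C else 0 with hdens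
  have hkey : betaMeasure a b = volume.withDensity fun x => ((dens x).toNNReal : ℝ≥0∞) := by
    simp only [betaMeasure, hdens, ENNReal.ofReal, hC]
  rw [hkey, integral_withDensity_eq_integral_smul ((dens_measurable a b C).real_toNNReal) f]
  have heq : (fun x => (dens x).toNNReal • f x)
      = Set.indicator (Set.Ioo (0:ℝ) 1)
          (fun x => f x * (x ^ (a-1) * (1-x) ^ (b-1)) / C) := by
    funext x
    rw [NNReal.smul_def, smul_eq_mul, Real.coe_toNNReal _ (dens_nonneg hCpos x)]
    by_cases hx : x ∈ Set.Ioo (0:ℝ) 1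
    · rw [Set.indicator_of_mem hx]; simp only [hdens, if_pos hx]; ring
    · rw [Set.indicator_of_notMem hx, if_neg hx, zero_mul]
  rw [heq, integral_indicator measurableSet_Ioo, integral_div]

lemma betaMeasure_ae_Ioo (a b : ℝ) : ∀ᵐ x ∂betaMeasure a b, x ∈ Set.Ioo (0:ℝ) 1 := by
  rw [ae_iff]
  have h1 : {x : ℝ | ¬ x ∈ Set.Ioo (0:ℝ) 1} = (Set.Ioo (0:ℝ) 1)ᶜ := rfl
  rw [h1, betaMeasure, withDensity_apply _ measurableSet_Ioo.compl]
  have h0 : ∀ x ∈ (Set.Ioo (0:ℝ) 1)ᶜ,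
      ENNReal.ofReal (if x ∈ Set.Ioo (0:ℝ) 1 then
        x ^ (a - 1) * (1 - x) ^ (b - 1) / (Real.Gamma a * Real.Gamma b / Real.Gamma (a + b))
      else 0) = (fun _ : ℝ => (0:ℝ≥0∞)) x := by
    intro x hx
    rw [if_neg hx]
    simp
  rw [setLIntegral_congr_fun measurableSet_Ioo.compl h0, lintegral_zero]

lemma betaMeasure_isProb {a b : ℝ} (ha : 0 < a) (hb : 0 < b) :
    IsProbabilityMeasure (betaMeasure a b) := by
  have hCpos := Bab_pos ha hb
  set C := Real.Gamma a * Real.Gamma b / Real.Gamma (a+b) with hC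
  have hfun : (fun x : ℝ => if x ∈ Set.Ioo (0:ℝ) 1 then x ^ (a-1) * (1-x) ^ (b-1) / C else 0)
      = Set.indicator (Set.Ioo (0:ℝ) 1) (fun x => x ^ (a-1) * (1-x) ^ (b-1) / C) := by
    funext x; by_cases hx : x ∈ Set.Ioo (0:ℝ) 1
    · rw [if_pos hx, Set.indicator_of_mem hx]
    · rw [if_neg hx, Set.indicator_of_notMem hx]
  have hInt : Integrable (fun x : ℝ =>
      if x ∈ Set.Ioo (0:ℝ) 1 then x ^ (a-1) * (1-x) ^ (b-1) / C else 0) volume := by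
    rw [hfun]
    exact MeasureTheory.IntegrableOn.integrable_indicator ((betaIntegrable_real ha hb).div_const C) measurableSet_Ioo
  constructor
  rw [betaMeasure, withDensity_apply _ MeasurableSet.univ, Measure.restrict_univ,
    ← ofReal_integral_eq_lintegral_ofReal hInt (ae_of_all _ (dens_nonneg hCpos))]
  rw [hfun, integral_indicator measurableSet_Ioo, integral_div, betaIntegral_real ha hb,
    ← hC, div_self hCpos.ne']
  simp

lemma beta_moment_one {a b : ℝ} (ha : 0 < a) (hb : 0 < b) :
    ∫ x, x ∂betaMeasure a b = a / (a + b) := by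
  rw [betaMeasure_integral ha hb]
  have h1 : ∫ x in Set.Ioo (0:ℝ) 1, x * (x ^ (a-1) * (1-x) ^ (b-1))
      = ∫ x in Set.Ioo (0:ℝ) 1, x ^ ((a+1)-1) * (1-x) ^ (b-1) := by
    refine setIntegral_congr_fun measurableSet_Ioo (fun x hx => ?_)
    rw [show (a+1)-1 = 1 + (a-1) by ring, Real.rpow_add hx.1, Real.rpow_one]
    ring
  rw [h1, betaIntegral_real (by linarith) hb]
  have hA : Real.Gamma (a+1) = a * Real.Gamma a := Real.Gamma_add_one ha.ne'
  have hAB : Real.Gamma (a+1+b) = (a+b) * Real.Gamma (a+b) := by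
    rw [show a+1+b = (a+b)+1 by ring, Real.Gamma_add_one (by positivity)]
  rw [hA, hAB]
  have g1 := (Real.Gamma_pos_of_pos ha).ne'
  have g2 := (Real.Gamma_pos_of_pos hb).ne'
  have g3 := (Real.Gamma_pos_of_pos (show (0:ℝ) < a+b by linarith)).ne'
  have hab : a + b ≠ 0 := by positivity
  field_simp

lemma beta_moment_two {a b : ℝ} (ha : 0 < a) (hb : 0 < b) :
    ∫ x, x ^ 2 ∂betaMeasure a b = a * (a+1) / ((a + b) * (a + b + 1)) := by
  rw [betaMeasure_integral ha hb]
  have h1 : ∫ x in Set.Ioo (0:ℝ) 1, x ^ 2 * (x ^ (a-1) * (1-x) ^ (b-1))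
      = ∫ x in Set.Ioo (0:ℝ) 1, x ^ ((a+2)-1) * (1-x) ^ (b-1) := by
    refine setIntegral_congr_fun measurableSet_Ioo (fun x hx => ?_)
    rw [show (a+2)-1 = 2 + (a-1) by ring, Real.rpow_add hx.1,
      show ((2:ℝ)) = ((2:ℕ):ℝ) by norm_num, Real.rpow_natCast]
    ring
  rw [h1, betaIntegral_real (by linarith) hb]
  have hA : Real.Gamma (a+2) = (a+1) * (a * Real.Gamma a) := by
    rw [show a+2 = (a+1)+1 by ring, Real.Gamma_add_one (by positivity),
      Real.Gamma_add_one ha.ne']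
  have hAB : Real.Gamma (a+2+b) = (a+b+1) * ((a+b) * Real.Gamma (a+b)) := by
    rw [show a+2+b = ((a+b)+1)+1 by ring, Real.Gamma_add_one (by positivity),
      Real.Gamma_add_one (by positivity)]
  rw [hA, hAB]
  have g1 := (Real.Gamma_pos_of_pos ha).ne'
  have g2 := (Real.Gamma_pos_of_pos hb).ne'
  have g3 := (Real.Gamma_pos_of_pos (show (0:ℝ) < a+b by linarith)).ne'
  have hab : a + b ≠ 0 := by positivity
  have hab1 : a + b + 1 ≠ 0 := by positivity
  field_simp

lemma beta_integrable_of_bounded {a b : ℝ} (ha : 0 < a) (hb : 0 < b) {f : ℝ → ℝ}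
    (hf : Continuous f) (Cf : ℝ) (hC : ∀ x ∈ Set.Ioo (0:ℝ) 1, |f x| ≤ Cf) :
    Integrable f (betaMeasure a b) := by
  haveI := betaMeasure_isProb ha hb
  refine Integrable.mono' (integrable_const Cf) hf.aestronglyMeasurable ?_
  filter_upwards [betaMeasure_ae_Ioo a b] with x hx
  simpa [Real.norm_eq_abs] using hC x hx


section Sphere

variable {k : ℕ} {ν : Measure (EuclideanSpace ℝ (Fin k))}

local notation "E" => EuclideanSpace ℝ (Fin k)

lemma sphere_ae (hsupp : ν {u : E | ‖u‖ = 1}ᶜ = 0) : ∀ᵐ u ∂ν, ‖u‖ = 1 := by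
  rw [ae_iff]; exact hsupp

lemma integral_comp_isometry (hinv : ∀ f : E ≃ₗᵢ[ℝ] E, ν.map f = ν)
    {g : E → ℝ} (hg : Continuous g) (f : E ≃ₗᵢ[ℝ] E) :
    ∫ u, g (f u) ∂ν = ∫ u, g u ∂ν := by
  conv_rhs => rw [← hinv f]
  rw [integral_map f.continuous.aemeasurable hg.aestronglyMeasurable]

lemma integrable_sphere_s8 (hprob : IsProbabilityMeasure ν) (hsupp : ν {u : E | ‖u‖ = 1}ᶜ = 0)
    {g : E → ℝ} (hg : Continuous g) (Cg : ℝ) (hC : ∀ u : E, ‖u‖ = 1 → |g u| ≤ Cg) :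
    Integrable g ν := by
  refine Integrable.mono' (integrable_const Cg) hg.aestronglyMeasurable ?_
  filter_upwards [sphere_ae hsupp] with u hu
  simpa [Real.norm_eq_abs] using hC u hu

lemma inner_cont (v : E) : Continuous fun u : E => (inner ℝ v u : ℝ) :=
  continuous_const.inner continuous_id

lemma integral_odd_vanish (hinv : ∀ f : E ≃ₗᵢ[ℝ] E, ν.map f = ν)
    {g : E → ℝ} (hg : Continuous g) (hodd : ∀ u, g (-u) = - g u) :
    ∫ u, g u ∂ν = 0 := by
  have h := integral_comp_isometry hinv hg (LinearIsometryEquiv.neg ℝ)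
  simp only [LinearIsometryEquiv.coe_neg, hodd] at h
  rw [integral_neg] at h
  linarith

lemma moment_one (hinv : ∀ f : E ≃ₗᵢ[ℝ] E, ν.map f = ν) (v : E) :
    ∫ u, (inner ℝ v u : ℝ) ∂ν = 0 := by
  refine integral_odd_vanish hinv (inner_cont v) fun u => ?_
  simp [inner_neg_right]

lemma moment_odd3 (hinv : ∀ f : E ≃ₗᵢ[ℝ] E, ν.map f = ν) (v w : E) :
    ∫ u, (inner ℝ v u : ℝ) ^ 2 * (inner ℝ w u : ℝ) ∂ν = 0 := by
  refine integral_odd_vanish hinv (((inner_cont v).pow 2).mul (inner_cont w)) fun u => ?_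
  simp only [inner_neg_right]
  ring

lemma integrable_ip2 (hprob : IsProbabilityMeasure ν) (hsupp : ν {u : E | ‖u‖ = 1}ᶜ = 0)
    (v w : E) : Integrable (fun u : E => (inner ℝ v u : ℝ) * (inner ℝ w u : ℝ)) ν := by
  refine integrable_sphere_s8 hprob hsupp ((inner_cont v).mul (inner_cont w)) (‖v‖ * ‖w‖) fun u hu => ?_
  rw [abs_mul]
  calc |(inner ℝ v u : ℝ)| * |(inner ℝ w u : ℝ)|
      ≤ (‖v‖ * ‖u‖) * (‖w‖ * ‖u‖) :=
        mul_le_mul (abs_real_inner_le_norm v u) (abs_real_inner_le_norm w u)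
          (abs_nonneg _) (by positivity)
    _ = ‖v‖ * ‖w‖ := by rw [hu]; ring

lemma integrable_ip4 (hprob : IsProbabilityMeasure ν) (hsupp : ν {u : E | ‖u‖ = 1}ᶜ = 0)
    (v w : E) : Integrable (fun u : E => (inner ℝ v u : ℝ) ^ 2 * (inner ℝ w u : ℝ) ^ 2) ν := by
  refine integrable_sphere_s8 hprob hsupp (((inner_cont v).pow 2).mul ((inner_cont w).pow 2)) ((‖v‖ * ‖w‖) ^ 2) fun u hu => ?_
  have h1 : |(inner ℝ v u : ℝ)| ≤ ‖v‖ := by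
    simpa [hu] using abs_real_inner_le_norm v u
  have h2 : |(inner ℝ w u : ℝ)| ≤ ‖w‖ := by
    simpa [hu] using abs_real_inner_le_norm w u
  have := mul_le_mul (mul_le_mul h1 h2 (abs_nonneg _) (norm_nonneg v))
    (mul_le_mul h1 h2 (abs_nonneg _) (norm_nonneg v)) (by positivity) (by positivity)
  calc |(inner ℝ v u : ℝ) ^ 2 * (inner ℝ w u : ℝ) ^ 2|
      = (|(inner ℝ v u : ℝ)| * |(inner ℝ w u : ℝ)|) * (|(inner ℝ v u : ℝ)| * |(inner ℝ w u : ℝ)|) := by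
        rw [abs_mul, abs_pow, abs_pow]; ring
    _ ≤ (‖v‖ * ‖w‖) * (‖v‖ * ‖w‖) := this
    _ = (‖v‖ * ‖w‖) ^ 2 := by ring

lemma integrable_ipow (hprob : IsProbabilityMeasure ν) (hsupp : ν {u : E | ‖u‖ = 1}ᶜ = 0)
    (v : E) (n : ℕ) : Integrable (fun u : E => (inner ℝ v u : ℝ) ^ n) ν := by
  refine integrable_sphere_s8 hprob hsupp ((inner_cont v).pow n) (‖v‖ ^ n) fun u hu => ?_
  rw [abs_pow]
  refine pow_le_pow_left₀ (abs_nonneg _) ?_ n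
  simpa [hu] using abs_real_inner_le_norm v u

/-- Invariance of pure power moments. -/
lemma pow_moment_inv (hinv : ∀ f : E ≃ₗᵢ[ℝ] E, ν.map f = ν) (f : E ≃ₗᵢ[ℝ] E) (v : E) (n : ℕ) :
    ∫ u, (inner ℝ (f v) u : ℝ) ^ n ∂ν = ∫ u, (inner ℝ v u : ℝ) ^ n ∂ν := by
  have h := integral_comp_isometry hinv
    (g := fun u : E => (inner ℝ (f v) u : ℝ) ^ n) ((inner_cont (f v)).pow n) f
  simp only [f.inner_map_map] at h
  exact h.symm

lemma pow_moment_unit (hinv : ∀ f : E ≃ₗᵢ[ℝ] E, ν.map f = ν) {e e' : E}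
    (he : ‖e‖ = ‖e'‖) (n : ℕ) :
    ∫ u, (inner ℝ e u : ℝ) ^ n ∂ν = ∫ u, (inner ℝ e' u : ℝ) ^ n ∂ν := by
  have hrefl : (Submodule.reflection (ℝ ∙ (e - e'))ᗮ) e = e' := Submodule.reflection_sub he
  have := pow_moment_inv hinv (Submodule.reflection (ℝ ∙ (e - e'))ᗮ) e n
  rw [hrefl] at this
  exact this.symm

lemma pow_moment_smul (c : ℝ) (v : E) (n : ℕ) :
    ∫ u, (inner ℝ (c • v) u : ℝ) ^ n ∂ν = c ^ n * ∫ u, (inner ℝ v u : ℝ) ^ n ∂ν := by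
  simp_rw [real_inner_smul_left, mul_pow]
  exact integral_const_mul _ _

lemma sum_inner_single_sq (x : E) (hk : 1 ≤ k) :
    ∑ i : Fin k, (inner ℝ (EuclideanSpace.single i (1:ℝ)) x : ℝ) ^ 2 = ‖x‖ ^ 2 := by
  rw [← real_inner_self_eq_norm_sq]
  simp [EuclideanSpace.inner_single_left, PiLp.inner_apply, RCLike.inner_apply, sq]
  rw [← sq, EuclideanSpace.norm_sq_eq]; simp [sq]


lemma trace_one (hprob : IsProbabilityMeasure ν) (hsupp : ν {u : E | ‖u‖ = 1}ᶜ = 0)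
    (hk : 1 ≤ k) :
    ∑ i : Fin k, ∫ u, (inner ℝ (EuclideanSpace.single i (1:ℝ)) u : ℝ) ^ 2 ∂ν = 1 := by
  rw [← integral_finset_sum _ (fun i _ => integrable_ipow hprob hsupp _ 2)]
  have hae : ∀ᵐ u ∂ν,
      (∑ i : Fin k, (inner ℝ (EuclideanSpace.single i (1:ℝ)) u : ℝ) ^ 2) = 1 := by
    filter_upwards [sphere_ae hsupp] with u hu
    rw [sum_inner_single_sq u hk, hu, one_pow]
  rw [integral_congr_ae hae, integral_const]
  simp

lemma pow2_single (hprob : IsProbabilityMeasure ν) (hsupp : ν {u : E | ‖u‖ = 1}ᶜ = 0)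
    (hinv : ∀ f : E ≃ₗᵢ[ℝ] E, ν.map f = ν) (hk : 1 ≤ k) :
    ∫ u, (inner ℝ (EuclideanSpace.single (⟨0, hk⟩ : Fin k) (1:ℝ)) u : ℝ) ^ 2 ∂ν
      = 1 / (k : ℝ) := by
  have ht := trace_one hprob hsupp hk
  have heq : ∀ i : Fin k, ∫ u, (inner ℝ (EuclideanSpace.single i (1:ℝ)) u : ℝ) ^ 2 ∂ν
      = ∫ u, (inner ℝ (EuclideanSpace.single (⟨0, hk⟩ : Fin k) (1:ℝ)) u : ℝ) ^ 2 ∂ν :=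
    fun i => pow_moment_unit hinv (by simp [EuclideanSpace.norm_single]) 2
  rw [Finset.sum_congr rfl (fun i _ => heq i), Finset.sum_const, Finset.card_univ,
    Fintype.card_fin, nsmul_eq_mul] at ht
  have hk0 : (k : ℝ) ≠ 0 := Nat.cast_ne_zero.2 (by omega)
  field_simp at ht ⊢
  linarith

lemma pow2_diag (hprob : IsProbabilityMeasure ν) (hsupp : ν {u : E | ‖u‖ = 1}ᶜ = 0)
    (hinv : ∀ f : E ≃ₗᵢ[ℝ] E, ν.map f = ν) (hk : 1 ≤ k) (v : E) :
    ∫ u, (inner ℝ v u : ℝ) ^ 2 ∂ν = ‖v‖ ^ 2 / (k : ℝ) := by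
  by_cases hv : v = 0
  · simp [hv, inner_zero_left]
  · have h0 : v = ‖v‖ • (‖v‖⁻¹ • v) := by
      rw [smul_smul, mul_inv_cancel₀ (norm_ne_zero_iff.2 hv), one_smul]
    calc ∫ u, (inner ℝ v u : ℝ) ^ 2 ∂ν
        = ∫ u, (inner ℝ (‖v‖ • (‖v‖⁻¹ • v)) u : ℝ) ^ 2 ∂ν := by rw [← h0]
      _ = ‖v‖ ^ 2 * ∫ u, (inner ℝ (‖v‖⁻¹ • v) u : ℝ) ^ 2 ∂ν := pow_moment_smul _ _ _
      _ = ‖v‖ ^ 2 * ∫ u, (inner ℝ (EuclideanSpace.single (⟨0, hk⟩ : Fin k) (1:ℝ)) u : ℝ) ^ 2 ∂ν := by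
          have hnorm : ‖(‖v‖⁻¹ : ℝ) • v‖ = ‖EuclideanSpace.single (⟨0, hk⟩ : Fin k) (1:ℝ)‖ := by
            rw [norm_smul, Real.norm_eq_abs, abs_inv, abs_norm,
              inv_mul_cancel₀ (norm_ne_zero_iff.2 hv), EuclideanSpace.norm_single, norm_one]
          rw [pow_moment_unit hinv hnorm 2]
      _ = ‖v‖ ^ 2 / (k : ℝ) := by rw [pow2_single hprob hsupp hinv hk]; ring

lemma moment_two (hprob : IsProbabilityMeasure ν) (hsupp : ν {u : E | ‖u‖ = 1}ᶜ = 0)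
    (hinv : ∀ f : E ≃ₗᵢ[ℝ] E, ν.map f = ν) (hk : 1 ≤ k) (v w : E) :
    ∫ u, (inner ℝ v u : ℝ) * (inner ℝ w u : ℝ) ∂ν = (inner ℝ v w : ℝ) / (k : ℝ) := by
  have i1 := integrable_ipow hprob hsupp w 2
  have i2 : Integrable (fun u : E => 2 * ((inner ℝ v u : ℝ) * (inner ℝ w u : ℝ))) ν :=
    (integrable_ip2 hprob hsupp v w).const_mul 2
  have i12 : Integrable (fun u : E => (inner ℝ w u : ℝ) ^ 2
      + 2 * ((inner ℝ v u : ℝ) * (inner ℝ w u : ℝ))) ν := i1.add i2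
  have e4 : ∫ u, (inner ℝ (v + w) u : ℝ) ^ 2 ∂ν
      = (∫ u, (inner ℝ v u : ℝ) ^ 2 ∂ν) + ((∫ u, (inner ℝ w u : ℝ) ^ 2 ∂ν)
          + 2 * ∫ u, (inner ℝ v u : ℝ) * (inner ℝ w u : ℝ) ∂ν) := by
    have h : (fun u : E => (inner ℝ (v + w) u : ℝ) ^ 2)
        = fun u : E => (inner ℝ v u : ℝ) ^ 2 + ((inner ℝ w u : ℝ) ^ 2
            + 2 * ((inner ℝ v u : ℝ) * (inner ℝ w u : ℝ))) :=
      funext fun u => by rw [inner_add_left]; ring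
    rw [h, integral_add (integrable_ipow hprob hsupp v 2) i12, integral_add i1 i2,
      integral_const_mul]
  rw [pow2_diag hprob hsupp hinv hk, pow2_diag hprob hsupp hinv hk,
    pow2_diag hprob hsupp hinv hk, @norm_add_sq_real] at e4
  have hk0 : (k : ℝ) ≠ 0 := Nat.cast_ne_zero.2 (by omega)
  field_simp at e4 ⊢
  linarith

lemma pow4_diag (hinv : ∀ f : E ≃ₗᵢ[ℝ] E, ν.map f = ν) (hk : 1 ≤ k) (v : E) :
    ∫ u, (inner ℝ v u : ℝ) ^ 4 ∂ν
      = ‖v‖ ^ 4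
          * ∫ u, (inner ℝ (EuclideanSpace.single (⟨0, hk⟩ : Fin k) (1:ℝ)) u : ℝ) ^ 4 ∂ν := by
  by_cases hv : v = 0
  · simp [hv, inner_zero_left]
  · have h0 : v = ‖v‖ • (‖v‖⁻¹ • v) := by
      rw [smul_smul, mul_inv_cancel₀ (norm_ne_zero_iff.2 hv), one_smul]
    calc ∫ u, (inner ℝ v u : ℝ) ^ 4 ∂ν
        = ∫ u, (inner ℝ (‖v‖ • (‖v‖⁻¹ • v)) u : ℝ) ^ 4 ∂ν := by rw [← h0]
      _ = ‖v‖ ^ 4 * ∫ u, (inner ℝ (‖v‖⁻¹ • v) u : ℝ) ^ 4 ∂ν := pow_moment_smul _ _ _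
      _ = ‖v‖ ^ 4 * ∫ u, (inner ℝ (EuclideanSpace.single (⟨0, hk⟩ : Fin k) (1:ℝ)) u : ℝ) ^ 4 ∂ν := by
          have hnorm : ‖(‖v‖⁻¹ : ℝ) • v‖ = ‖EuclideanSpace.single (⟨0, hk⟩ : Fin k) (1:ℝ)‖ := by
            rw [norm_smul, Real.norm_eq_abs, abs_inv, abs_norm,
              inv_mul_cancel₀ (norm_ne_zero_iff.2 hv), EuclideanSpace.norm_single, norm_one]
          rw [pow_moment_unit hinv hnorm 4]

lemma Q_eq (hprob : IsProbabilityMeasure ν) (hsupp : ν {u : E | ‖u‖ = 1}ᶜ = 0)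
    (hinv : ∀ f : E ≃ₗᵢ[ℝ] E, ν.map f = ν) (hk : 1 ≤ k) (v w : E) :
    ∫ u, (inner ℝ v u : ℝ) ^ 2 * (inner ℝ w u : ℝ) ^ 2 ∂ν
      = (∫ u, (inner ℝ (EuclideanSpace.single (⟨0, hk⟩ : Fin k) (1:ℝ)) u : ℝ) ^ 4 ∂ν)
          * (‖v‖ ^ 2 * ‖w‖ ^ 2 + 2 * (inner ℝ v w : ℝ) ^ 2) / 3 := by
  have i4v := integrable_ipow hprob hsupp v 4
  have i4w := integrable_ipow hprob hsupp w 4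
  have iQ := integrable_ip4 hprob hsupp v w
  have iA : Integrable (fun u : E => 2 * (inner ℝ v u : ℝ) ^ 4) ν := i4v.const_mul 2
  have iB : Integrable (fun u : E => 2 * (inner ℝ w u : ℝ) ^ 4) ν := i4w.const_mul 2
  have iC : Integrable (fun u : E => 12 * ((inner ℝ v u : ℝ) ^ 2 * (inner ℝ w u : ℝ) ^ 2)) ν :=
    iQ.const_mul 12
  have iBC : Integrable (fun u : E => 2 * (inner ℝ w u : ℝ) ^ 4
      + 12 * ((inner ℝ v u : ℝ) ^ 2 * (inner ℝ w u : ℝ) ^ 2)) ν := iB.add iC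
  have key : ∫ u, (inner ℝ (v + w) u : ℝ) ^ 4 ∂ν + ∫ u, (inner ℝ (v - w) u : ℝ) ^ 4 ∂ν
      = 2 * ∫ u, (inner ℝ v u : ℝ) ^ 4 ∂ν + (2 * ∫ u, (inner ℝ w u : ℝ) ^ 4 ∂ν
          + 12 * ∫ u, (inner ℝ v u : ℝ) ^ 2 * (inner ℝ w u : ℝ) ^ 2 ∂ν) := by
    have h : (fun u : E => (inner ℝ (v + w) u : ℝ) ^ 4 + (inner ℝ (v - w) u : ℝ) ^ 4)
        = fun u : E => 2 * (inner ℝ v u : ℝ) ^ 4 + (2 * (inner ℝ w u : ℝ) ^ 4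
            + 12 * ((inner ℝ v u : ℝ) ^ 2 * (inner ℝ w u : ℝ) ^ 2)) :=
      funext fun u => by rw [inner_add_left, inner_sub_left]; ring
    rw [← integral_add (integrable_ipow hprob hsupp (v + w) 4)
        (integrable_ipow hprob hsupp (v - w) 4), h,
      integral_add iA iBC, integral_add iB iC,
      integral_const_mul, integral_const_mul, integral_const_mul]
  rw [pow4_diag hinv hk (v + w), pow4_diag hinv hk (v - w), pow4_diag hinv hk v,
    pow4_diag hinv hk w] at key
  have hvw : ‖v + w‖ ^ 4 = (‖v‖ ^ 2 + 2 * (inner ℝ v w : ℝ) + ‖w‖ ^ 2) ^ 2 := by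
    rw [show ‖v + w‖ ^ 4 = (‖v + w‖ ^ 2) ^ 2 by ring, @norm_add_sq_real]
  have hvw' : ‖v - w‖ ^ 4 = (‖v‖ ^ 2 - 2 * (inner ℝ v w : ℝ) + ‖w‖ ^ 2) ^ 2 := by
    rw [show ‖v - w‖ ^ 4 = (‖v - w‖ ^ 2) ^ 2 by ring, @norm_sub_sq_real]
  rw [hvw, hvw'] at key
  linear_combination -key / 12

lemma pow4_single_val (hprob : IsProbabilityMeasure ν) (hsupp : ν {u : E | ‖u‖ = 1}ᶜ = 0)
    (hinv : ∀ f : E ≃ₗᵢ[ℝ] E, ν.map f = ν) (hk : 1 ≤ k) :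
    ∫ u, (inner ℝ (EuclideanSpace.single (⟨0, hk⟩ : Fin k) (1:ℝ)) u : ℝ) ^ 4 ∂ν
      = 3 / ((k : ℝ) * ((k : ℝ) + 2)) := by
  set e₀ : E := EuclideanSpace.single (⟨0, hk⟩ : Fin k) (1:ℝ) with he₀
  have h1 : ∑ i : Fin k, ∫ u, (inner ℝ e₀ u : ℝ) ^ 2
        * (inner ℝ (EuclideanSpace.single i (1:ℝ)) u : ℝ) ^ 2 ∂ν
      = ∫ u, (inner ℝ e₀ u : ℝ) ^ 2 ∂ν := by
    rw [← integral_finset_sum _ (fun i _ => integrable_ip4 hprob hsupp _ _)]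
    refine integral_congr_ae ?_
    filter_upwards [sphere_ae hsupp] with u hu
    rw [← Finset.mul_sum, sum_inner_single_sq u hk, hu, one_pow, mul_one]
  have h2 : ∀ i : Fin k, ∫ u, (inner ℝ e₀ u : ℝ) ^ 2
        * (inner ℝ (EuclideanSpace.single i (1:ℝ)) u : ℝ) ^ 2 ∂ν
      = (∫ u, (inner ℝ e₀ u : ℝ) ^ 4 ∂ν)
          * (1 + 2 * (inner ℝ e₀ (EuclideanSpace.single i (1:ℝ)) : ℝ) ^ 2) / 3 := by
    intro i
    rw [Q_eq hprob hsupp hinv hk]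
    rw [he₀]
    simp [EuclideanSpace.norm_single]
  have h3 : ∑ i : Fin k, (inner ℝ e₀ (EuclideanSpace.single i (1:ℝ)) : ℝ) ^ 2 = 1 := by
    have := sum_inner_single_sq e₀ hk
    rw [he₀, EuclideanSpace.norm_single, norm_one, one_pow] at this
    calc ∑ i : Fin k, (inner ℝ e₀ (EuclideanSpace.single i (1:ℝ)) : ℝ) ^ 2
        = ∑ i : Fin k, (inner ℝ (EuclideanSpace.single i (1:ℝ))
            (EuclideanSpace.single (⟨0, hk⟩ : Fin k) (1:ℝ)) : ℝ) ^ 2 := by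
          refine Finset.sum_congr rfl fun i _ => ?_
          rw [he₀, real_inner_comm]
      _ = 1 := this
  rw [Finset.sum_congr rfl (fun i _ => h2 i)] at h1
  rw [pow2_diag hprob hsupp hinv hk, he₀, EuclideanSpace.norm_single, norm_one] at h1
  have h5 : ∑ i : Fin k, ((1:ℝ) + 2 * (inner ℝ e₀ (EuclideanSpace.single i (1:ℝ)) : ℝ) ^ 2)
      = (k : ℝ) + 2 := by
    rw [Finset.sum_add_distrib, ← Finset.mul_sum, h3, Finset.sum_const, Finset.card_univ,
      Fintype.card_fin, nsmul_eq_mul, mul_one, mul_one]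
  have h4 : ∑ i : Fin k, (∫ u, (inner ℝ e₀ u : ℝ) ^ 4 ∂ν)
        * (1 + 2 * (inner ℝ e₀ (EuclideanSpace.single i (1:ℝ)) : ℝ) ^ 2) / 3
      = (∫ u, (inner ℝ e₀ u : ℝ) ^ 4 ∂ν) * ((k : ℝ) + 2) / 3 := by
    rw [← Finset.sum_div, ← Finset.mul_sum, h5]
  rw [h4] at h1
  have hk0 : (k : ℝ) ≠ 0 := Nat.cast_ne_zero.2 (by omega)
  have hk2 : (k : ℝ) + 2 ≠ 0 := by positivity
  field_simp at h1 ⊢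
  linarith


lemma integrable_ip3 (hprob : IsProbabilityMeasure ν) (hsupp : ν {u : E | ‖u‖ = 1}ᶜ = 0)
    (v w : E) : Integrable (fun u : E => (inner ℝ v u : ℝ) ^ 2 * (inner ℝ w u : ℝ)) ν := by
  refine integrable_sphere_s8 hprob hsupp (((inner_cont v).pow 2).mul (inner_cont w))
    (‖v‖ ^ 2 * ‖w‖) fun u hu => ?_
  have h1 : |(inner ℝ v u : ℝ)| ≤ ‖v‖ := by simpa [hu] using abs_real_inner_le_norm v u
  have h2 : |(inner ℝ w u : ℝ)| ≤ ‖w‖ := by simpa [hu] using abs_real_inner_le_norm w u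
  rw [abs_mul, abs_pow]
  exact mul_le_mul (pow_le_pow_left₀ (abs_nonneg _) h1 2) h2 (abs_nonneg _) (by positivity)

lemma moment_four (hprob : IsProbabilityMeasure ν) (hsupp : ν {u : E | ‖u‖ = 1}ᶜ = 0)
    (hinv : ∀ f : E ≃ₗᵢ[ℝ] E, ν.map f = ν) (hk : 1 ≤ k) (v w : E) :
    ∫ u, (inner ℝ v u : ℝ) ^ 2 * (inner ℝ w u : ℝ) ^ 2 ∂ν
      = (‖v‖ ^ 2 * ‖w‖ ^ 2 + 2 * (inner ℝ v w : ℝ) ^ 2) / ((k : ℝ) * ((k : ℝ) + 2)) := by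
  rw [Q_eq hprob hsupp hinv hk, pow4_single_val hprob hsupp hinv hk]
  have hk0 : (k : ℝ) ≠ 0 := Nat.cast_ne_zero.2 (by omega)
  have hk2 : (k : ℝ) + 2 ≠ 0 := by positivity
  field_simp

lemma toEuclideanLin_mul_apply {n : ℕ} (M N : Matrix (Fin n) (Fin n) ℝ)
    (v : EuclideanSpace ℝ (Fin n)) :
    Matrix.toEuclideanLin (M * N) v = Matrix.toEuclideanLin M (Matrix.toEuclideanLin N v) := by
  simp [Matrix.toEuclideanLin_apply, Matrix.mulVec_mulVec]

end Sphere
set_option maxHeartbeats 2000000 in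
/-- Let `B ~ Beta(k/2, d/2)` and let `u` be uniform on the unit sphere of
`ℝ^k` (law `ν`: the normalized rotation-invariant probability measure carried by the unit
sphere), independent of `B` (so that the pair `(B, u)` has the product law). With `S`
symmetric positive definite, `Rt` its unique symmetric positive definite square root
(`Rt * Rt = S`, `S^{-1/2} = Rt⁻¹`),
`ζ(B,u) = S⁻¹ m + √(B(1−B)) S^{-1/2} u − B·S^{-1/2} u uᵀ S^{-1/2} m`,
`c₁ = bᵀ S⁻¹ b`, `c₂ = mᵀ S⁻¹ m`, `c₁₂ = bᵀ S⁻¹ m`, one has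
`E[(bᵀ ζ(B,u))²] = (1 − 2/(k+d) + 2/((k+d)(k+d+2))) c₁₂²
  + (d/((k+d)(k+d+2)) + c₂/((k+d)(k+d+2))) c₁`. -/
theorem expectation_sq_dot_zeta {k : ℕ} (hk : 1 ≤ k) (d : ℝ) (hd : 0 < d)
    (ν : Measure (EuclideanSpace ℝ (Fin k))) (hprob : IsProbabilityMeasure ν)
    (hsupp : ν {u : EuclideanSpace ℝ (Fin k) | ‖u‖ = 1}ᶜ = 0)
    (hinv : ∀ f : EuclideanSpace ℝ (Fin k) ≃ₗᵢ[ℝ] EuclideanSpace ℝ (Fin k), ν.map f = ν)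
    (S Rt : Matrix (Fin k) (Fin k) ℝ)
    (hS : S.PosDef) (hRt : Rt.PosDef) (hRtS : Rt * Rt = S)
    (m b : EuclideanSpace ℝ (Fin k))
    (ζ : ℝ → EuclideanSpace ℝ (Fin k) → EuclideanSpace ℝ (Fin k))
    (hζ : ∀ B u, ζ B u = Matrix.toEuclideanLin S⁻¹ m
      + Real.sqrt (B * (1 - B)) • Matrix.toEuclideanLin Rt⁻¹ u
      - (B * (inner ℝ u (Matrix.toEuclideanLin Rt⁻¹ m) : ℝ)) • Matrix.toEuclideanLin Rt⁻¹ u)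
    (c₁ c₂ c₁₂ : ℝ)
    (hc₁ : c₁ = (inner ℝ b (Matrix.toEuclideanLin S⁻¹ b) : ℝ))
    (hc₂ : c₂ = (inner ℝ m (Matrix.toEuclideanLin S⁻¹ m) : ℝ))
    (hc₁₂ : c₁₂ = (inner ℝ b (Matrix.toEuclideanLin S⁻¹ m) : ℝ)) :
    ∫ p : ℝ × EuclideanSpace ℝ (Fin k), (inner ℝ b (ζ p.1 p.2) : ℝ) ^ 2
        ∂((betaMeasure ((k : ℝ) / 2) (d / 2)).prod ν) =
      (1 - 2 / ((k : ℝ) + d) + 2 / (((k : ℝ) + d) * ((k : ℝ) + d + 2))) * c₁₂ ^ 2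
        + (d / (((k : ℝ) + d) * ((k : ℝ) + d + 2))
            + c₂ / (((k : ℝ) + d) * ((k : ℝ) + d + 2))) * c₁ := by
  have hK : 0 < (k : ℝ) := by exact_mod_cast Nat.pos_of_ne_zero (by omega)
  have ha : 0 < (k : ℝ) / 2 := by positivity
  have hb : 0 < d / 2 := by positivity
  haveI hβ : IsProbabilityMeasure (betaMeasure ((k : ℝ) / 2) (d / 2)) :=
    betaMeasure_isProb ha hb
  haveI := hprob
  -- the symmetric operator `A = S^{-1/2}`
  have hherm : (Rt⁻¹).IsHermitian := hRt.1.inv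
  have hsym := Matrix.isHermitian_iff_isSymmetric.mp hherm
  set A := Matrix.toEuclideanLin Rt⁻¹ with hA
  set bp := A b with hbp
  set mp := A m with hmp
  have hSi : ∀ x : EuclideanSpace ℝ (Fin k), Matrix.toEuclideanLin S⁻¹ x = A (A x) := by
    intro x
    rw [← hRtS, Matrix.mul_inv_rev, toEuclideanLin_mul_apply]
  have hc₁' : c₁ = (inner ℝ bp bp : ℝ) := by rw [hc₁, hSi b, ← hsym b (A b)]
  have hc₂' : c₂ = (inner ℝ mp mp : ℝ) := by rw [hc₂, hSi m, ← hsym m (A m)]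
  have hc₁₂' : c₁₂ = (inner ℝ bp mp : ℝ) := by rw [hc₁₂, hSi m, ← hsym b (A m)]
  have hnb : ‖bp‖ ^ 2 = c₁ := by rw [hc₁', real_inner_self_eq_norm_sq]
  have hnm : ‖mp‖ ^ 2 = c₂ := by rw [hc₂', real_inner_self_eq_norm_sq]
  have hmb : (inner ℝ mp bp : ℝ) = c₁₂ := by rw [hc₁₂', real_inner_comm]
  -- the scalar integrand
  have hX : ∀ (B : ℝ) (u : EuclideanSpace ℝ (Fin k)),
      (inner ℝ b (ζ B u) : ℝ)
        = c₁₂ + Real.sqrt (B * (1 - B)) * (inner ℝ bp u : ℝ)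
            - B * ((inner ℝ mp u : ℝ) * (inner ℝ bp u : ℝ)) := by
    intro B u
    have e1 : (inner ℝ b (Matrix.toEuclideanLin S⁻¹ m) : ℝ) = (inner ℝ bp mp : ℝ) := by
      rw [hSi m, ← hsym b (A m)]
    have e2 : (inner ℝ b (A u) : ℝ) = (inner ℝ bp u : ℝ) := (hsym b u).symm
    have e3 : (inner ℝ u (A m) : ℝ) = (inner ℝ mp u : ℝ) := real_inner_comm _ _
    rw [hζ B u, inner_sub_right, inner_add_right, real_inner_smul_right,
      real_inner_smul_right, e1, e2, e3, ← hc₁₂']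
    ring
  -- integrability of the beta-side factors
  have hsqrt_cont : Continuous fun x : ℝ => Real.sqrt (x * (1 - x)) :=
    Real.continuous_sqrt.comp (continuous_id.mul (continuous_const.sub continuous_id))
  have hsqrt_le : ∀ x ∈ Set.Ioo (0:ℝ) 1, Real.sqrt (x * (1 - x)) ≤ 1 := by
    intro x hx
    calc Real.sqrt (x * (1 - x)) ≤ Real.sqrt 1 :=
          Real.sqrt_le_sqrt (by nlinarith [hx.1, hx.2])
      _ = 1 := Real.sqrt_one
  have iB1 : Integrable (fun x : ℝ => x) (betaMeasure ((k : ℝ) / 2) (d / 2)) :=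
    beta_integrable_of_bounded ha hb continuous_id 1
      (fun x hx => by rw [abs_of_pos hx.1]; exact hx.2.le)
  have iB2 : Integrable (fun x : ℝ => x ^ 2) (betaMeasure ((k : ℝ) / 2) (d / 2)) :=
    beta_integrable_of_bounded ha hb (continuous_id.pow 2) 1
      (fun x hx => by
        rw [abs_of_nonneg (sq_nonneg x)]
        nlinarith [hx.1, hx.2])
  have iBs2 : Integrable (fun x : ℝ => Real.sqrt (x * (1 - x)) ^ 2)
      (betaMeasure ((k : ℝ) / 2) (d / 2)) :=
    beta_integrable_of_bounded ha hb (hsqrt_cont.pow 2) 1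
      (fun x hx => by
        rw [abs_of_nonneg (by positivity)]
        exact pow_le_one₀ (Real.sqrt_nonneg _) (hsqrt_le x hx))
  have iB4 : Integrable (fun x : ℝ => 2 * c₁₂ * Real.sqrt (x * (1 - x)))
      (betaMeasure ((k : ℝ) / 2) (d / 2)) :=
    (beta_integrable_of_bounded ha hb hsqrt_cont 1
      (fun x hx => by rw [abs_of_nonneg (Real.sqrt_nonneg _)]; exact hsqrt_le x hx)).const_mul _
  have iB5 : Integrable (fun x : ℝ => -2 * c₁₂ * x) (betaMeasure ((k : ℝ) / 2) (d / 2)) :=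
    iB1.const_mul _
  have iB6' : Integrable (fun x : ℝ => x * Real.sqrt (x * (1 - x)))
      (betaMeasure ((k : ℝ) / 2) (d / 2)) :=
    beta_integrable_of_bounded ha hb (continuous_id'.mul hsqrt_cont) 1
      (fun x hx => by
        rw [abs_of_nonneg (mul_nonneg hx.1.le (Real.sqrt_nonneg (x * (1 - x))))]
        calc x * Real.sqrt (x * (1 - x)) ≤ 1 * 1 :=
              mul_le_mul hx.2.le (hsqrt_le x hx) (Real.sqrt_nonneg _) zero_le_one
          _ = 1 := mul_one 1)
  have iB6 : Integrable (fun x : ℝ => -2 * (x * Real.sqrt (x * (1 - x))))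
      (betaMeasure ((k : ℝ) / 2) (d / 2)) := iB6'.const_mul _
  -- integrability of the sphere-side factors
  have iS1 : Integrable (fun u : EuclideanSpace ℝ (Fin k) => (inner ℝ bp u : ℝ)) ν :=
    integrable_sphere_s8 hprob hsupp (inner_cont bp) ‖bp‖
      (fun u hu => by simpa [hu] using abs_real_inner_le_norm bp u)
  have iS2 : Integrable (fun u : EuclideanSpace ℝ (Fin k) => (inner ℝ bp u : ℝ) ^ 2) ν :=
    integrable_ipow hprob hsupp bp 2
  have iS3 : Integrable (fun u : EuclideanSpace ℝ (Fin k) =>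
      (inner ℝ mp u : ℝ) ^ 2 * (inner ℝ bp u : ℝ) ^ 2) ν := integrable_ip4 hprob hsupp mp bp
  have iS5 : Integrable (fun u : EuclideanSpace ℝ (Fin k) =>
      (inner ℝ mp u : ℝ) * (inner ℝ bp u : ℝ)) ν := integrable_ip2 hprob hsupp mp bp
  have iS6 : Integrable (fun u : EuclideanSpace ℝ (Fin k) =>
      (inner ℝ bp u : ℝ) ^ 2 * (inner ℝ mp u : ℝ)) ν := integrable_ip3 hprob hsupp bp mp
  -- product integrabilities
  have iP1 : Integrable (fun p : ℝ × EuclideanSpace ℝ (Fin k) =>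
      (fun _ : ℝ => c₁₂ ^ 2) p.1 * (fun _ : EuclideanSpace ℝ (Fin k) => (1:ℝ)) p.2)
      ((betaMeasure ((k : ℝ) / 2) (d / 2)).prod ν) :=
    Integrable.mul_prod (f := fun _ : ℝ => c₁₂ ^ 2)
      (g := fun _ : EuclideanSpace ℝ (Fin k) => (1:ℝ)) (integrable_const _) (integrable_const _)
  have iP2 : Integrable (fun p : ℝ × EuclideanSpace ℝ (Fin k) =>
      (fun x : ℝ => Real.sqrt (x * (1 - x)) ^ 2) p.1
        * (fun u : EuclideanSpace ℝ (Fin k) => (inner ℝ bp u : ℝ) ^ 2) p.2)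
      ((betaMeasure ((k : ℝ) / 2) (d / 2)).prod ν) := iBs2.mul_prod iS2
  have iP3 : Integrable (fun p : ℝ × EuclideanSpace ℝ (Fin k) =>
      (fun x : ℝ => x ^ 2) p.1
        * (fun u : EuclideanSpace ℝ (Fin k) =>
            (inner ℝ mp u : ℝ) ^ 2 * (inner ℝ bp u : ℝ) ^ 2) p.2)
      ((betaMeasure ((k : ℝ) / 2) (d / 2)).prod ν) := iB2.mul_prod iS3
  have iP4 : Integrable (fun p : ℝ × EuclideanSpace ℝ (Fin k) =>
      (fun x : ℝ => 2 * c₁₂ * Real.sqrt (x * (1 - x))) p.1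
        * (fun u : EuclideanSpace ℝ (Fin k) => (inner ℝ bp u : ℝ)) p.2)
      ((betaMeasure ((k : ℝ) / 2) (d / 2)).prod ν) := iB4.mul_prod iS1
  have iP5 : Integrable (fun p : ℝ × EuclideanSpace ℝ (Fin k) =>
      (fun x : ℝ => -2 * c₁₂ * x) p.1
        * (fun u : EuclideanSpace ℝ (Fin k) =>
            (inner ℝ mp u : ℝ) * (inner ℝ bp u : ℝ)) p.2)
      ((betaMeasure ((k : ℝ) / 2) (d / 2)).prod ν) := iB5.mul_prod iS5
  have iP6 : Integrable (fun p : ℝ × EuclideanSpace ℝ (Fin k) =>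
      (fun x : ℝ => -2 * (x * Real.sqrt (x * (1 - x)))) p.1
        * (fun u : EuclideanSpace ℝ (Fin k) =>
            (inner ℝ bp u : ℝ) ^ 2 * (inner ℝ mp u : ℝ)) p.2)
      ((betaMeasure ((k : ℝ) / 2) (d / 2)).prod ν) := iB6.mul_prod iS6
  have iP56 : Integrable (fun p : ℝ × EuclideanSpace ℝ (Fin k) =>
      (fun x : ℝ => -2 * c₁₂ * x) p.1
        * (fun u : EuclideanSpace ℝ (Fin k) =>
            (inner ℝ mp u : ℝ) * (inner ℝ bp u : ℝ)) p.2
      + (fun x : ℝ => -2 * (x * Real.sqrt (x * (1 - x)))) p.1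
        * (fun u : EuclideanSpace ℝ (Fin k) =>
            (inner ℝ bp u : ℝ) ^ 2 * (inner ℝ mp u : ℝ)) p.2)
      ((betaMeasure ((k : ℝ) / 2) (d / 2)).prod ν) := iP5.add iP6
  have iP456 : Integrable (fun p : ℝ × EuclideanSpace ℝ (Fin k) =>
      (fun x : ℝ => 2 * c₁₂ * Real.sqrt (x * (1 - x))) p.1
        * (fun u : EuclideanSpace ℝ (Fin k) => (inner ℝ bp u : ℝ)) p.2
      + ((fun x : ℝ => -2 * c₁₂ * x) p.1
        * (fun u : EuclideanSpace ℝ (Fin k) =>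
            (inner ℝ mp u : ℝ) * (inner ℝ bp u : ℝ)) p.2
      + (fun x : ℝ => -2 * (x * Real.sqrt (x * (1 - x)))) p.1
        * (fun u : EuclideanSpace ℝ (Fin k) =>
            (inner ℝ bp u : ℝ) ^ 2 * (inner ℝ mp u : ℝ)) p.2))
      ((betaMeasure ((k : ℝ) / 2) (d / 2)).prod ν) := iP4.add iP56
  have iP3456 : Integrable (fun p : ℝ × EuclideanSpace ℝ (Fin k) =>
      (fun x : ℝ => x ^ 2) p.1
        * (fun u : EuclideanSpace ℝ (Fin k) =>
            (inner ℝ mp u : ℝ) ^ 2 * (inner ℝ bp u : ℝ) ^ 2) p.2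
      + ((fun x : ℝ => 2 * c₁₂ * Real.sqrt (x * (1 - x))) p.1
        * (fun u : EuclideanSpace ℝ (Fin k) => (inner ℝ bp u : ℝ)) p.2
      + ((fun x : ℝ => -2 * c₁₂ * x) p.1
        * (fun u : EuclideanSpace ℝ (Fin k) =>
            (inner ℝ mp u : ℝ) * (inner ℝ bp u : ℝ)) p.2
      + (fun x : ℝ => -2 * (x * Real.sqrt (x * (1 - x)))) p.1
        * (fun u : EuclideanSpace ℝ (Fin k) =>
            (inner ℝ bp u : ℝ) ^ 2 * (inner ℝ mp u : ℝ)) p.2)))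
      ((betaMeasure ((k : ℝ) / 2) (d / 2)).prod ν) := iP3.add iP456
  have iP23456 : Integrable (fun p : ℝ × EuclideanSpace ℝ (Fin k) =>
      (fun x : ℝ => Real.sqrt (x * (1 - x)) ^ 2) p.1
        * (fun u : EuclideanSpace ℝ (Fin k) => (inner ℝ bp u : ℝ) ^ 2) p.2
      + ((fun x : ℝ => x ^ 2) p.1
        * (fun u : EuclideanSpace ℝ (Fin k) =>
            (inner ℝ mp u : ℝ) ^ 2 * (inner ℝ bp u : ℝ) ^ 2) p.2
      + ((fun x : ℝ => 2 * c₁₂ * Real.sqrt (x * (1 - x))) p.1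
        * (fun u : EuclideanSpace ℝ (Fin k) => (inner ℝ bp u : ℝ)) p.2
      + ((fun x : ℝ => -2 * c₁₂ * x) p.1
        * (fun u : EuclideanSpace ℝ (Fin k) =>
            (inner ℝ mp u : ℝ) * (inner ℝ bp u : ℝ)) p.2
      + (fun x : ℝ => -2 * (x * Real.sqrt (x * (1 - x)))) p.1
        * (fun u : EuclideanSpace ℝ (Fin k) =>
            (inner ℝ bp u : ℝ) ^ 2 * (inner ℝ mp u : ℝ)) p.2))))
      ((betaMeasure ((k : ℝ) / 2) (d / 2)).prod ν) := iP2.add iP3456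
  -- expand the square
  have hsplit : (fun p : ℝ × EuclideanSpace ℝ (Fin k) => (inner ℝ b (ζ p.1 p.2) : ℝ) ^ 2)
      = fun p : ℝ × EuclideanSpace ℝ (Fin k) =>
      (fun _ : ℝ => c₁₂ ^ 2) p.1 * (fun _ : EuclideanSpace ℝ (Fin k) => (1:ℝ)) p.2
      + ((fun x : ℝ => Real.sqrt (x * (1 - x)) ^ 2) p.1
        * (fun u : EuclideanSpace ℝ (Fin k) => (inner ℝ bp u : ℝ) ^ 2) p.2
      + ((fun x : ℝ => x ^ 2) p.1
        * (fun u : EuclideanSpace ℝ (Fin k) =>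
            (inner ℝ mp u : ℝ) ^ 2 * (inner ℝ bp u : ℝ) ^ 2) p.2
      + ((fun x : ℝ => 2 * c₁₂ * Real.sqrt (x * (1 - x))) p.1
        * (fun u : EuclideanSpace ℝ (Fin k) => (inner ℝ bp u : ℝ)) p.2
      + ((fun x : ℝ => -2 * c₁₂ * x) p.1
        * (fun u : EuclideanSpace ℝ (Fin k) =>
            (inner ℝ mp u : ℝ) * (inner ℝ bp u : ℝ)) p.2
      + (fun x : ℝ => -2 * (x * Real.sqrt (x * (1 - x)))) p.1
        * (fun u : EuclideanSpace ℝ (Fin k) =>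
            (inner ℝ bp u : ℝ) ^ 2 * (inner ℝ mp u : ℝ)) p.2)))) := by
    funext p
    simp only []
    rw [hX p.1 p.2]
    ring
  rw [hsplit, integral_add iP1 iP23456, integral_add iP2 iP3456, integral_add iP3 iP456,
    integral_add iP4 iP56, integral_add iP5 iP6,
    integral_prod_mul (f := fun _ : ℝ => c₁₂ ^ 2)
      (g := fun _ : EuclideanSpace ℝ (Fin k) => (1:ℝ)),
    integral_prod_mul (f := fun x : ℝ => Real.sqrt (x * (1 - x)) ^ 2)
      (g := fun u : EuclideanSpace ℝ (Fin k) => (inner ℝ bp u : ℝ) ^ 2),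
    integral_prod_mul (f := fun x : ℝ => x ^ 2)
      (g := fun u : EuclideanSpace ℝ (Fin k) =>
        (inner ℝ mp u : ℝ) ^ 2 * (inner ℝ bp u : ℝ) ^ 2),
    integral_prod_mul (f := fun x : ℝ => 2 * c₁₂ * Real.sqrt (x * (1 - x)))
      (g := fun u : EuclideanSpace ℝ (Fin k) => (inner ℝ bp u : ℝ)),
    integral_prod_mul (f := fun x : ℝ => -2 * c₁₂ * x)
      (g := fun u : EuclideanSpace ℝ (Fin k) => (inner ℝ mp u : ℝ) * (inner ℝ bp u : ℝ)),
    integral_prod_mul (f := fun x : ℝ => -2 * (x * Real.sqrt (x * (1 - x))))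
      (g := fun u : EuclideanSpace ℝ (Fin k) =>
        (inner ℝ bp u : ℝ) ^ 2 * (inner ℝ mp u : ℝ))]
  -- sphere moments
  rw [moment_one hinv bp, moment_odd3 hinv bp mp,
    pow2_diag hprob hsupp hinv hk bp, moment_four hprob hsupp hinv hk mp bp,
    moment_two hprob hsupp hinv hk mp bp]
  -- beta moments
  have bS2 : ∫ x, Real.sqrt (x * (1 - x)) ^ 2 ∂betaMeasure ((k : ℝ) / 2) (d / 2)
      = (k : ℝ) / 2 / ((k : ℝ) / 2 + d / 2)
        - (k : ℝ) / 2 * ((k : ℝ) / 2 + 1)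
            / (((k : ℝ) / 2 + d / 2) * ((k : ℝ) / 2 + d / 2 + 1)) := by
    have h1 : ∫ x, Real.sqrt (x * (1 - x)) ^ 2 ∂betaMeasure ((k : ℝ) / 2) (d / 2)
        = ∫ x, (x - x ^ 2) ∂betaMeasure ((k : ℝ) / 2) (d / 2) := by
      refine integral_congr_ae ?_
      filter_upwards [betaMeasure_ae_Ioo ((k : ℝ) / 2) (d / 2)] with x hx
      rw [Real.sq_sqrt (by nlinarith [hx.1, hx.2])]
      ring
    rw [h1, integral_sub iB1 iB2, beta_moment_one ha hb, beta_moment_two ha hb]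
  simp only [mul_zero]
  rw [bS2, integral_const_mul, beta_moment_one ha hb, beta_moment_two ha hb,
    integral_const, integral_const]
  simp only [measure_univ, probReal_univ, ENNReal.toReal_one, smul_eq_mul, one_mul, mul_one]
  rw [hnb, hnm, hmb, hc₁₂']
  have h0 : (k : ℝ) + d ≠ 0 := by positivity
  have h2 : (k : ℝ) + d + 2 ≠ 0 := by positivity
  have h3 : (k : ℝ) ≠ 0 := hK.ne'
  have h4 : (k : ℝ) + 2 ≠ 0 := by positivity
  have h5 : (k : ℝ) / 2 + d / 2 ≠ 0 := by positivity
  have h6 : (k : ℝ) / 2 + d / 2 + 1 ≠ 0 := by positivity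
  field_simp
  ring
end

section
/- Let k ≥ 1 be an integer, let S be a symmetric positive definite k×k real matrix with unique symmetric positive definite square root S^{1/2} (inverse S^{−1/2}), and let m ∈ ℝ^k. For B ∈ [0,1] and a unit vector u ∈ ℝ^k, define ζ(B,u) = S^{−1} m + √(B(1−B)) S^{−1/2} u − B · S^{−1/2} u uᵀ S^{−1/2} m, ε(B,u) = mᵀ S^{−1} m + 2√(B(1−B)) mᵀ S^{−1/2} u + B − B ( mᵀ S^{−1/2} u )², and Υ(B,u) = S^{−1} − B · S^{−1/2} u uᵀ S^{−1/2}. Then for every B ∈ [0,1] and every unit vector u ∈ ℝ^k, the matrix ε(B,u)·Υ(B,u) − ζ(B,u) ζ(B,u)ᵀ is symmetric positive semidefinite. -/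
open Matrix

private lemma aux_cs (A C E t d : ℝ) (hA : 0 ≤ A) (hC : 0 ≤ C) (hE : E^2 ≤ A*C) :
    (E + t*d)^2 ≤ (A + t^2) * (C + d^2) := by
  rcases eq_or_lt_of_le hA with h | h
  · have hE0 : E = 0 := by nlinarith [sq_nonneg E]
    subst hE0
    have hA0 : A = 0 := h.symm
    subst hA0
    nlinarith [mul_nonneg (sq_nonneg t) hC]
  · nlinarith [sq_nonneg (A*d - E*t), mul_nonneg (sub_nonneg.2 hE) h.le,
      mul_nonneg (sub_nonneg.2 hE) (sq_nonneg t)]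

private lemma aux2 (A C E c a s B : ℝ) (hA : 0 ≤ A) (hC : 0 ≤ C) (hE : E^2 ≤ A*C)
    (hB0 : 0 ≤ B) (hB1 : B ≤ 1) (hs0 : 0 ≤ s) (hs : s^2 = B*(1-B)) :
    (E + (1-B)*c*a + s*a)^2 ≤ (A + (1-B)*c^2 + 2*s*c + B) * (C + (1-B)*a^2) := by
  set p := Real.sqrt (1-B) with hpdef
  set q := Real.sqrt B with hqdef
  have hp : p^2 = 1 - B := Real.sq_sqrt (by linarith)
  have hq : q^2 = B := Real.sq_sqrt hB0
  have hpq : p * q = s := by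
    have : s = Real.sqrt (B*(1-B)) := by
      rw [← hs]; exact (Real.sqrt_sq hs0).symm
    rw [this, Real.sqrt_mul hB0]; ring
  have key := aux_cs A C E (p*c+q) (p*a) hA hC hE
  have e1 : A + (p*c+q)^2 = A + (1-B)*c^2 + 2*s*c + B := by
    linear_combination c^2 * hp + 2*c*hpq + hq
  have e2 : C + (p*a)^2 = C + (1-B)*a^2 := by linear_combination a^2 * hp
  have e3 : E + (p*c+q)*(p*a) = E + (1-B)*c*a + s*a := by
    linear_combination c*a*hp + a*hpq
  rw [e1, e2, e3] at key
  exact key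

private lemma key_ineq {k : ℕ} (B : ℝ) (hB0 : 0 ≤ B) (hB1 : B ≤ 1)
    (u w y : Fin k → ℝ) (hu : u ⬝ᵥ u = 1) :
    (w ⬝ᵥ y + Real.sqrt (B*(1-B)) * (u ⬝ᵥ y) - B * (u ⬝ᵥ w) * (u ⬝ᵥ y))^2 ≤
      (w ⬝ᵥ w + 2 * Real.sqrt (B*(1-B)) * (u ⬝ᵥ w) + B - B * (u ⬝ᵥ w)^2)
        * (y ⬝ᵥ y - B * (u ⬝ᵥ y)^2) := by
  have hc := dotProduct_comm u w
  have ha := dotProduct_comm u y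
  have hwu : (w - (u ⬝ᵥ w) • u) ⬝ᵥ (w - (u ⬝ᵥ w) • u) = w ⬝ᵥ w - (u ⬝ᵥ w)^2 := by
    simp [sub_dotProduct, dotProduct_sub, smul_dotProduct, dotProduct_smul, hu,
      dotProduct_comm u w]
    ring
  have hyu : (y - (u ⬝ᵥ y) • u) ⬝ᵥ (y - (u ⬝ᵥ y) • u) = y ⬝ᵥ y - (u ⬝ᵥ y)^2 := by
    simp [sub_dotProduct, dotProduct_sub, smul_dotProduct, dotProduct_smul, hu,
      dotProduct_comm u y]
    ring
  have hwy : (w - (u ⬝ᵥ w) • u) ⬝ᵥ (y - (u ⬝ᵥ y) • u) = w ⬝ᵥ y - (u ⬝ᵥ w) * (u ⬝ᵥ y) := by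
    simp [sub_dotProduct, dotProduct_sub, smul_dotProduct, dotProduct_smul, hu,
      dotProduct_comm u w, dotProduct_comm u y]
    try ring
  have hA : 0 ≤ w ⬝ᵥ w - (u ⬝ᵥ w)^2 := by
    rw [← hwu, dotProduct]
    exact Finset.sum_nonneg fun i _ => mul_self_nonneg _
  have hC : 0 ≤ y ⬝ᵥ y - (u ⬝ᵥ y)^2 := by
    rw [← hyu, dotProduct]
    exact Finset.sum_nonneg fun i _ => mul_self_nonneg _
  have hE : (w ⬝ᵥ y - (u ⬝ᵥ w) * (u ⬝ᵥ y))^2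
      ≤ (w ⬝ᵥ w - (u ⬝ᵥ w)^2) * (y ⬝ᵥ y - (u ⬝ᵥ y)^2) := by
    rw [← hwu, ← hyu, ← hwy]
    simpa [dotProduct, sq] using
      Finset.sum_mul_sq_le_sq_mul_sq Finset.univ (w - (u ⬝ᵥ w) • u) (y - (u ⬝ᵥ y) • u)
  have hs : (Real.sqrt (B*(1-B)))^2 = B*(1-B) :=
    Real.sq_sqrt (mul_nonneg hB0 (by linarith))
  have := aux2 (w ⬝ᵥ w - (u ⬝ᵥ w)^2) (y ⬝ᵥ y - (u ⬝ᵥ y)^2)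
    (w ⬝ᵥ y - (u ⬝ᵥ w) * (u ⬝ᵥ y)) (u ⬝ᵥ w) (u ⬝ᵥ y) (Real.sqrt (B*(1-B))) B
    hA hC hE hB0 hB1 (Real.sqrt_nonneg _) hs
  nlinarith [this]

private lemma herm_transpose {k : ℕ} {M : Matrix (Fin k) (Fin k) ℝ}
    (h : M.IsHermitian) : Mᵀ = M := by
  ext i j
  have := congr_fun (congr_fun h.eq i) j
  simpa [conjTranspose_apply] using this

private lemma real_smul_herm {k : ℕ} (c : ℝ) {M : Matrix (Fin k) (Fin k) ℝ}
    (h : M.IsHermitian) : (c • M).IsHermitian := by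
  show (c • M)ᴴ = c • M
  ext i j
  have := congr_fun (congr_fun h.eq i) j
  simp only [conjTranspose_apply, Matrix.smul_apply, smul_eq_mul, star_trivial] at this ⊢
  rw [this]

private lemma vmv_herm {k : ℕ} (u : Fin k → ℝ) : (vecMulVec u u).IsHermitian := by
  show (vecMulVec u u)ᴴ = vecMulVec u u
  ext i j
  simp [conjTranspose_apply, vecMulVec_apply, mul_comm]

private lemma vmv_mulVec {k : ℕ} (a b z : Fin k → ℝ) :
    vecMulVec a b *ᵥ z = (b ⬝ᵥ z) • a := by
  ext i
  simp only [mulVec, dotProduct, vecMulVec_apply, Pi.smul_apply, smul_eq_mul, Finset.sum_mul]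
  exact Finset.sum_congr rfl fun j _ => by ring

/-- With `S` symmetric positive definite, `Rt` its unique symmetric positive
definite square root (`Rt * Rt = S`, `S^{-1/2} = Rt⁻¹`), for every `B ∈ [0,1]` and every unit
vector `u` (Euclidean norm one, i.e. `u ⬝ᵥ u = 1`), the matrix
`ε(B,u)·Υ(B,u) − ζ(B,u) ζ(B,u)ᵀ` is symmetric positive semidefinite, where
`ζ(B,u) = S⁻¹ m + √(B(1−B)) S^{-1/2} u − B S^{-1/2} u uᵀ S^{-1/2} m`,
`ε(B,u) = mᵀ S⁻¹ m + 2√(B(1−B)) mᵀ S^{-1/2} u + B − B (mᵀ S^{-1/2} u)²`,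
`Υ(B,u) = S⁻¹ − B S^{-1/2} u uᵀ S^{-1/2}`. -/
theorem epsUpsilon_sub_zetazeta_posSemidef {k : ℕ} (hk : 1 ≤ k)
    (S Rt : Matrix (Fin k) (Fin k) ℝ)
    (hS : S.PosDef) (hRt : Rt.PosDef) (hRtS : Rt * Rt = S)
    (m : Fin k → ℝ)
    (ζ : ℝ → (Fin k → ℝ) → (Fin k → ℝ))
    (hζ : ∀ B u, ζ B u = S⁻¹ *ᵥ m + Real.sqrt (B * (1 - B)) • (Rt⁻¹ *ᵥ u)
      - B • ((Rt⁻¹ * vecMulVec u u * Rt⁻¹) *ᵥ m))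
    (ε : ℝ → (Fin k → ℝ) → ℝ)
    (hε : ∀ B u, ε B u = m ⬝ᵥ (S⁻¹ *ᵥ m) + 2 * Real.sqrt (B * (1 - B)) * (m ⬝ᵥ (Rt⁻¹ *ᵥ u))
      + B - B * (m ⬝ᵥ (Rt⁻¹ *ᵥ u)) ^ 2)
    (Υ : ℝ → (Fin k → ℝ) → Matrix (Fin k) (Fin k) ℝ)
    (hΥ : ∀ B u, Υ B u = S⁻¹ - B • (Rt⁻¹ * vecMulVec u u * Rt⁻¹)) :
    ∀ B ∈ Set.Icc (0:ℝ) 1, ∀ u : Fin k → ℝ, u ⬝ᵥ u = 1 →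
      (ε B u • Υ B u - vecMulVec (ζ B u) (ζ B u)).PosSemidef := by
  intro B hB u hu
  obtain ⟨hB0, hB1⟩ := hB
  set T := Rt⁻¹ with hTdef
  have hTHerm : T.IsHermitian := hRt.isHermitian.inv
  have hT : Tᵀ = T := herm_transpose hTHerm
  have hSinv : S⁻¹ = T * T := by rw [← hRtS, Matrix.mul_inv_rev]
  -- symmetric part
  have hTVT : (T * vecMulVec u u * T).IsHermitian := by
    have := isHermitian_conjTranspose_mul_mul T (vmv_herm u)
    rwa [hTHerm.eq] at this
  have hSinvH : S⁻¹.IsHermitian := hS.isHermitian.inv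
  have hΥH : (Υ B u).IsHermitian := by
    rw [hΥ]
    exact hSinvH.sub (real_smul_herm B hTVT)
  refine PosSemidef.of_dotProduct_mulVec_nonneg ((real_smul_herm _ hΥH).sub (vmv_herm _)) ?_
  intro x
  have hstar : star x = x := by funext i; exact star_trivial _
  rw [hstar]
  set w := T *ᵥ m with hw
  set y := T *ᵥ x with hy
  have hdotT : ∀ v z : Fin k → ℝ, v ⬝ᵥ (T *ᵥ z) = (T *ᵥ v) ⬝ᵥ z := by
    intro v z
    rw [dotProduct_mulVec, ← mulVec_transpose, hT]
  have hMu : ∀ z : Fin k → ℝ, (T * vecMulVec u u * T) *ᵥ z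
      = T *ᵥ ((u ⬝ᵥ (T *ᵥ z)) • u) := by
    intro z
    rw [← mulVec_mulVec, ← mulVec_mulVec, vmv_mulVec]
  have h1 : m ⬝ᵥ (S⁻¹ *ᵥ m) = w ⬝ᵥ w := by
    rw [hSinv, ← mulVec_mulVec, hdotT, ← hw]
  have h2 : m ⬝ᵥ (T *ᵥ u) = u ⬝ᵥ w := by rw [hdotT, ← hw, dotProduct_comm]
  have h3 : x ⬝ᵥ (S⁻¹ *ᵥ x) = y ⬝ᵥ y := by
    rw [hSinv, ← mulVec_mulVec, hdotT, ← hy]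
  have h4 : x ⬝ᵥ ((T * vecMulVec u u * T) *ᵥ x) = (u ⬝ᵥ y)^2 := by
    rw [hMu, ← hy, hdotT, ← hy, dotProduct_smul, smul_eq_mul, dotProduct_comm y u]
    ring
  have h5 : x ⬝ᵥ ((T * vecMulVec u u * T) *ᵥ m) = (u ⬝ᵥ w) * (u ⬝ᵥ y) := by
    rw [hMu, ← hw, hdotT, ← hy, dotProduct_smul, smul_eq_mul, dotProduct_comm y u]
  have h6 : x ⬝ᵥ (S⁻¹ *ᵥ m) = w ⬝ᵥ y := by
    rw [hSinv, ← mulVec_mulVec, hdotT, ← hw, ← hy, dotProduct_comm]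
  have h7 : x ⬝ᵥ (T *ᵥ u) = u ⬝ᵥ y := by rw [hdotT, ← hy, dotProduct_comm]
  have hζx : ζ B u ⬝ᵥ x = w ⬝ᵥ y + Real.sqrt (B*(1-B)) * (u ⬝ᵥ y)
      - B * ((u ⬝ᵥ w) * (u ⬝ᵥ y)) := by
    rw [dotProduct_comm, hζ, dotProduct_sub, dotProduct_add, dotProduct_smul,
      dotProduct_smul, h6, h7, h5, smul_eq_mul, smul_eq_mul]
  have main : x ⬝ᵥ ((ε B u • Υ B u - vecMulVec (ζ B u) (ζ B u)) *ᵥ x)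
      = (w ⬝ᵥ w + 2 * Real.sqrt (B*(1-B)) * (u ⬝ᵥ w) + B - B * (u ⬝ᵥ w)^2)
          * (y ⬝ᵥ y - B * (u ⬝ᵥ y)^2)
        - (w ⬝ᵥ y + Real.sqrt (B*(1-B)) * (u ⬝ᵥ y) - B * ((u ⬝ᵥ w) * (u ⬝ᵥ y)))^2 := by
    rw [sub_mulVec, dotProduct_sub, smul_mulVec, dotProduct_smul, smul_eq_mul,
      vmv_mulVec, dotProduct_smul, smul_eq_mul, dotProduct_comm x (ζ B u), hζx,
      hε, hΥ, sub_mulVec, dotProduct_sub, smul_mulVec, dotProduct_smul, smul_eq_mul,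
      h1, h2, h3, h4]
    ring
  rw [main]
  have key := key_ineq B hB0 hB1 u w y hu
  nlinarith [key]
end

section
/- Let A be a symmetric positive definite k×k real matrix, let c > 0, c' > 0, p > 0, q > 0 be real numbers, and let x̄ ∈ ℝ^k. Define h(m) = det( A + c' (m − x̄)(m − x̄)ᵀ )^{−q} · ( 1 + c (m − x̄)ᵀ ( A + c' (m − x̄)(m − x̄)ᵀ )^{−1} (m − x̄) )^{−p} for m ∈ ℝ^k. Then h attains its maximum over ℝ^k uniquely at m = x̄, with maximal value det(A)^{−q}. -/
open Matrix

lemma vecMulVec_posSemidef {k : ℕ} (v : Fin k → ℝ) (c' : ℝ) (hc' : 0 ≤ c') :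
    (c' • vecMulVec v v).PosSemidef := by
  rw [posSemidef_iff_dotProduct_mulVec]
  constructor
  · ext i j
    simp [conjTranspose_apply, vecMulVec_apply, mul_comm]
  · intro x
    have hmv : (c' • vecMulVec v v) *ᵥ x = c' • ((v ⬝ᵥ x) • v) := by
      ext i
      simp [mulVec, dotProduct, vecMulVec_apply, Finset.mul_sum, Finset.sum_mul]
      congr 1; ext j; ring
    rw [hmv]
    simp only [star_trivial, dotProduct_smul, smul_eq_mul, dotProduct_comm x v]
    nlinarith [mul_self_nonneg (v ⬝ᵥ x)]

lemma smul_vecMulVec' {k : ℕ} (v : Fin k → ℝ) (c' : ℝ) :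
    c' • vecMulVec v v = replicateCol Unit (c' • v) * replicateRow Unit v := by
  rw [← vecMulVec_eq]
  ext i j
  simp [vecMulVec_apply]
  ring

lemma det_A_add {k : ℕ} (A : Matrix (Fin k) (Fin k) ℝ) (hA : A.PosDef)
    (v : Fin k → ℝ) (c' : ℝ) :
    (A + c' • vecMulVec v v).det = A.det * (1 + c' * (v ⬝ᵥ A⁻¹ *ᵥ v)) := by
  rw [smul_vecMulVec', det_add_replicateCol_mul_replicateRow hA.det_pos.ne'.isUnit]
  congr 1
  rw [det_unique, dotProduct_mulVec]
  simp only [Pi.add_apply, one_apply_eq, mul_apply, replicateCol_apply, replicateRow_apply, Pi.smul_apply,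
    smul_eq_mul, Matrix.vecMul, dotProduct, Finset.mul_sum]
  simp only [Matrix.add_apply, Matrix.one_apply_eq, Matrix.mul_apply, Matrix.replicateRow_apply,
    Matrix.replicateCol_apply, Pi.smul_apply, smul_eq_mul]
  congr 1
  exact Finset.sum_congr rfl fun j _ => by ring

/-- For `A` symmetric positive definite, `c, c' > 0`, `p, q > 0` and
`x̄ ∈ ℝ^k`, the function
`h(m) = det(A + c'(m−x̄)(m−x̄)ᵀ)^{−q} (1 + c (m−x̄)ᵀ (A + c'(m−x̄)(m−x̄)ᵀ)⁻¹ (m−x̄))^{−p}`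
attains its maximum over `ℝ^k` uniquely at `m = x̄`, with maximal value `det(A)^{−q}`. -/
theorem empirical_bayes_mean_max {k : ℕ} (A : Matrix (Fin k) (Fin k) ℝ) (hA : A.PosDef)
    (c c' p q : ℝ) (hc : 0 < c) (hc' : 0 < c') (hp : 0 < p) (hq : 0 < q)
    (xbar : Fin k → ℝ)
    (h : (Fin k → ℝ) → ℝ)
    (hh : ∀ m, h m = (A + c' • vecMulVec (m - xbar) (m - xbar)).det ^ (-q)
      * (1 + c * ((m - xbar) ⬝ᵥ
          ((A + c' • vecMulVec (m - xbar) (m - xbar))⁻¹ *ᵥ (m - xbar)))) ^ (-p)) :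
    (∀ m : Fin k → ℝ, m ≠ xbar → h m < h xbar) ∧ h xbar = A.det ^ (-q) := by
  have hxbar : h xbar = A.det ^ (-q) := by
    have hz : vecMulVec ((xbar : Fin k → ℝ) - xbar) (xbar - xbar) = 0 := by
      ext i j; simp [vecMulVec_apply]
    rw [hh xbar, hz]
    simp
  refine ⟨fun m hm => ?_, hxbar⟩
  rw [hxbar, hh m]
  set v : Fin k → ℝ := m - xbar with hv
  have hv0 : v ≠ 0 := sub_ne_zero.mpr hm
  set M : Matrix (Fin k) (Fin k) ℝ := A + c' • vecMulVec v v with hM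
  have hMpd : M.PosDef := hA.add_posSemidef (vecMulVec_posSemidef v c' hc'.le)
  -- determinant strictly increases
  have hs : 0 < v ⬝ᵥ A⁻¹ *ᵥ v := by
    have := hA.inv.dotProduct_mulVec_pos hv0
    simpa using this
  have hdet : M.det = A.det * (1 + c' * (v ⬝ᵥ A⁻¹ *ᵥ v)) := det_A_add A hA v c'
  have hdetlt : A.det < M.det := by
    rw [hdet]
    nlinarith [mul_pos hA.det_pos (mul_pos hc' hs)]
  -- quadratic form with M⁻¹ is positive
  have ht : 0 < v ⬝ᵥ M⁻¹ *ᵥ v := by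
    have := hMpd.inv.dotProduct_mulVec_pos hv0
    simpa using this
  have h1 : M.det ^ (-q) < A.det ^ (-q) :=
    Real.rpow_lt_rpow_of_neg hA.det_pos hdetlt (neg_neg_iff_pos.mpr hq)
  have h2 : (1 + c * (v ⬝ᵥ M⁻¹ *ᵥ v)) ^ (-p) < 1 :=
    Real.rpow_lt_one_of_one_lt_of_neg (by nlinarith) (neg_neg_iff_pos.mpr hp)
  have hMdq : 0 < M.det ^ (-q) := Real.rpow_pos_of_pos hMpd.det_pos _
  have h2' : 0 < (1 + c * (v ⬝ᵥ M⁻¹ *ᵥ v)) ^ (-p) := Real.rpow_pos_of_pos (by nlinarith) _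
  calc M.det ^ (-q) * (1 + c * (v ⬝ᵥ M⁻¹ *ᵥ v)) ^ (-p)
      < M.det ^ (-q) * 1 := by nlinarith
    _ = M.det ^ (-q) := mul_one _
    _ < A.det ^ (-q) := h1
end
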